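/- arXiv:0811.4152 — 5 statements merged into one kernel-verified Lean document; each statement's English description precedes it below -/
import Mathlib

section
/- Fix a λ-chain (β₁,...,β_m) with associated affine reflections r̂_i = s_{β_i, l_i} and Weyl reflections r_i = s_{β_i}. Let (w,J) be a folding pair encoding an alcove walk Ω with fp(Ω) = J = {j₁ < ... < j_s} and unfold(Ω) = w(Π). Then the weight of Ω equals w(μ(J)), where μ(J) = r̂_{j₁}···r̂_{j_s}(λ). -/
/-!
Statement 5: Fix a λ-chain (β₁,…,β_m), i.e. a reduced alcove path Π from A° to the
alcove of the minimal element of τ_λ W, with affine reflections r̂_i = s_{β_i,l_i},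
l_i = #{j ≤ i : β_j = β_i}.  Let (w,J) be a folding pair encoding the alcove walk
Ω = φ_{j₁} ⋯ φ_{j_s}(w(Π)) with J = {j₁ < … < j_s}.  Then the weight of Ω (its final
vertex) equals w(μ(J)), where μ(J) = r̂_{j₁} ⋯ r̂_{j_s}(λ).
-/

namespace Stmt5



open scoped RealInnerProductSpace

/-- the ambient Euclidean space -/
abbrev V (n : ℕ) := EuclideanSpace ℝ (Fin n)

/-- the standard coroot α^∨ = 2α/⟨α,α⟩ -/
noncomputable def coroot {n : ℕ} (α : V n) : V n := (2 / (‖α‖ ^ 2)) • α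

/-- the pairing ⟨x, α^∨⟩ -/
noncomputable def cpair {n : ℕ} (x α : V n) : ℝ := ⟪x, coroot α⟫

/-- the affine hyperplane H_{α,k} = {x : ⟨x,α^∨⟩ = k} -/
def Hyp {n : ℕ} (α : V n) (k : ℝ) : Set (V n) := {x | cpair x α = k}

/-- the union of all affine hyperplanes of the arrangement -/
def allHyps {n : ℕ} (pos : Finset (V n)) : Set (V n) :=
  ⋃ α ∈ pos, ⋃ k : ℤ, Hyp α (k : ℝ)

/-- an alcove: a connected component of the complement of the hyperplane arrangement -/
def IsAlcove {n : ℕ} (pos : Finset (V n)) (A : Set (V n)) : Prop :=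
  ∃ x, x ∉ allHyps pos ∧ A = connectedComponentIn (allHyps pos)ᶜ x

/-- the fundamental alcove A° -/
def fundAlcove {n : ℕ} (pos : Finset (V n)) : Set (V n) :=
  {x | ∀ α ∈ pos, 0 < cpair x α ∧ cpair x α < 1}

/-- the affine reflection s_{α,k} -/
noncomputable def affRefl {n : ℕ} (α : V n) (k : ℝ) (x : V n) : V n :=
  x - (cpair x α - k) • α

/-- p lies on the hyperplane H_{α,k} and on no other hyperplane of the arrangement -/
def onlyOn {n : ℕ} (pos : Finset (V n)) (p α : V n) (k : ℝ) : Prop :=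
  cpair p α = k ∧
  ∀ β ∈ pos, ∀ l : ℤ, cpair p β = (l : ℝ) → Hyp β (l : ℝ) = Hyp α k

/-- A and B are adjacent alcoves with common wall H_{β,k}, and the root β points in the
direction from A to B -/
def AdjStep {n : ℕ} (pos : Finset (V n)) (A B : Set (V n)) (β : V n) (k : ℝ) : Prop :=
  IsAlcove pos A ∧ IsAlcove pos B ∧ B = affRefl β k '' A ∧
  (∀ a ∈ A, cpair a β < k) ∧ (∀ b ∈ B, k < cpair b β) ∧
  ∃ p, p ∈ closure A ∩ closure B ∧ onlyOn pos p β k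

/-- an alcove path with the given labels (roots and hyperplane levels) -/
def IsAlcovePath {n m : ℕ} (pos : Finset (V n)) (A : Fin (m + 1) → Set (V n))
    (β : Fin m → V n) (kk : Fin m → ℤ) : Prop :=
  ∀ i : Fin m, AdjStep pos (A i.castSucc) (A i.succ) (β i) ((kk i : ℝ))

/-- a reduced alcove path: of minimal length among all alcove paths with the same
endpoints -/
def IsReducedPath {n m : ℕ} (pos : Finset (V n)) (A : Fin (m + 1) → Set (V n))
    (β : Fin m → V n) (kk : Fin m → ℤ) : Prop :=
  IsAlcovePath pos A β kk ∧
  ∀ (m' : ℕ) (A' : Fin (m' + 1) → Set (V n)) (β' : Fin m' → V n) (kk' : Fin m' → ℤ),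
    IsAlcovePath pos A' β' kk' → A' 0 = A 0 → A' (Fin.last m') = A (Fin.last m) →
      m ≤ m'

/-- the finite Weyl group W, as a monoid of self-maps of V generated by the linear
reflections s_α (it is a group since the generators are involutions) -/
noncomputable def Wfin {n : ℕ} (pos : Finset (V n)) : Submonoid (Function.End (V n)) :=
  Submonoid.closure {g | ∃ α ∈ pos, g = affRefl α 0}

/-- translation by λ -/
def tau {n : ℕ} (lamv : V n) : Function.End (V n) := fun x => x + lamv

/-- H_{β,k} separates S and T -/
def SeparatesH {n : ℕ} (β : V n) (k : ℝ) (S T : Set (V n)) : Prop :=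
  ((∀ x ∈ S, cpair x β < k) ∧ (∀ y ∈ T, k < cpair y β)) ∨
  ((∀ x ∈ T, cpair x β < k) ∧ (∀ y ∈ S, k < cpair y β))

/-- the length of an affine Weyl group element: the number of affine hyperplanes
separating A° from g(A°) -/
noncomputable def lenAff {n : ℕ} (pos : Finset (V n)) (g : Function.End (V n)) : ℕ :=
  Set.ncard {q : V n × ℤ | q.1 ∈ pos ∧
    SeparatesH q.1 (q.2 : ℝ) (fundAlcove pos) (g '' fundAlcove pos)}

/-- v is the minimal-length element of the coset τ_λ W of the affine Weyl group -/
noncomputable def IsMinCoset {n : ℕ} (pos : Finset (V n)) (lamv : V n)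
    (v : Function.End (V n)) : Prop :=
  (∃ u ∈ Wfin pos, v = tau lamv * u) ∧
  ∀ v' : Function.End (V n), (∃ u ∈ Wfin pos, v' = tau lamv * u) →
    lenAff pos v ≤ lenAff pos v'
/-- the data of an alcove walk Ω = (A₀, F₁, A₁, …, F_m, A_m, F_∞): the alcoves, the
hyperplane data (root and level) of the codimension-one faces F₁,…,F_m, and the final
vertex F_∞. -/
structure Walk (n m : ℕ) where
  A : Fin (m + 1) → Set (V n)
  beta : Fin m → V n
  kk : Fin m → ℝ
  Finf : V n

/-- the walk conditions: each A_i is an alcove; F_i (contained in the hyperplane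
H_{β_i,k_i}) is a codimension-one common face of A_{i-1} and A_i (which are either equal
-- a folding -- or reflections of one another in that hyperplane); and F_∞ is a vertex
(an extreme point of the closure) of the last alcove. -/
def IsWalk {n m : ℕ} (pos : Finset (V n)) (Ω : Walk n m) : Prop :=
  (∀ j, IsAlcove pos (Ω.A j)) ∧
  (∀ t : Fin m,
    (Ω.A t.succ = Ω.A t.castSucc ∨
      Ω.A t.succ = affRefl (Ω.beta t) (Ω.kk t) '' Ω.A t.castSucc) ∧
    ∃ p, p ∈ closure (Ω.A t.castSucc) ∩ closure (Ω.A t.succ) ∧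
      onlyOn pos p (Ω.beta t) (Ω.kk t)) ∧
  Ω.Finf ∈ Set.extremePoints ℝ (closure (Ω.A (Fin.last m)))

/-- the folding operator φ_{t+1}: keep the initial segment of the walk up to A_t and
reflect the rest (alcoves, faces and final vertex) in the hyperplane H of the face F_{t+1};
the hyperplane data of the reflected faces is transported along the reflection. -/
noncomputable def fold {n m : ℕ} (t : Fin m) (Ω : Walk n m) : Walk n m where
  A := fun j => if (j : ℕ) ≤ (t : ℕ) then Ω.A j
    else affRefl (Ω.beta t) (Ω.kk t) '' Ω.A j
  beta := fun s => if (s : ℕ) ≤ (t : ℕ) then Ω.beta s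
    else Ω.beta s - (⟪Ω.beta s, coroot (Ω.beta t)⟫ : ℝ) • Ω.beta t
  kk := fun s => if (s : ℕ) ≤ (t : ℕ) then Ω.kk s
    else Ω.kk s - Ω.kk t * (⟪Ω.beta t, coroot (Ω.beta s)⟫ : ℝ)
  Finf := affRefl (Ω.beta t) (Ω.kk t) Ω.Finf

open Classical in
/-- the set of folding positions of a walk -/
noncomputable def fp {n m : ℕ} (Ω : Walk n m) : Finset (Fin m) :=
  Finset.univ.filter fun t => Ω.A t.castSucc = Ω.A t.succ

/-- unfold(Ω) = φ_{j₁} ⋯ φ_{j_s}(Ω), where fp(Ω) = {j₁ < … < j_s} -/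
noncomputable def unfoldW {n m : ℕ} (Ω : Walk n m) : Walk n m :=
  ((fp Ω).sort (· ≤ ·)).foldr fold Ω

lemma foldr_beta_kk {n m : ℕ} (L : List (Fin m)) (Ω : Walk n m) (i : Fin m)
    (h : ∀ t ∈ L, i ≤ t) :
    (L.foldr fold Ω).beta i = Ω.beta i ∧ (L.foldr fold Ω).kk i = Ω.kk i := by
  induction L with
  | nil => exact ⟨rfl, rfl⟩
  | cons t L' ih =>
    have ht : i ≤ t := h t List.mem_cons_self
    have ih' := ih (fun s hs => h s (List.mem_cons_of_mem _ hs))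
    simp only [List.foldr_cons, fold, if_pos (show (i : ℕ) ≤ (t : ℕ) from ht)]
    exact ih'

theorem weight_of_folded_walk {n m : ℕ} (pos : Finset (V n)) (lamv : V n)
    (A : Fin (m + 1) → Set (V n)) (beta : Fin m → V n) (kk : Fin m → ℤ)
    (hpath : IsReducedPath pos A beta kk)
    (hstart : A 0 = fundAlcove pos)
    (v : Function.End (V n)) (hv : IsMinCoset pos lamv v)
    (hend : A (Fin.last m) = v '' fundAlcove pos)
    (hl : ∀ i : Fin m, (kk i : ℤ) = Set.ncard {j : Fin m | j ≤ i ∧ beta j = beta i})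
    (w winv : Function.End (V n)) (hw : w ∈ Wfin pos)
    (hinv : w * winv = 1 ∧ winv * w = 1)
    (Ω₀ : Walk n m)
    (hA : ∀ j, Ω₀.A j = w '' A j)
    (hrefl : ∀ i : Fin m,
      affRefl (Ω₀.beta i) (Ω₀.kk i) = w ∘ affRefl (beta i) ((kk i : ℝ)) ∘ winv)
    (hFinf : Ω₀.Finf = w lamv)
    (J : Finset (Fin m)) :
    ((J.sort (· ≤ ·)).foldr fold Ω₀).Finf
      = w ((J.sort (· ≤ ·)).foldr (fun i x => affRefl (beta i) ((kk i : ℝ)) x) lamv) := by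
  have key : ∀ L : List (Fin m), L.Pairwise (· ≤ ·) →
      (L.foldr fold Ω₀).Finf
        = w (L.foldr (fun i x => affRefl (beta i) ((kk i : ℝ)) x) lamv) := by
    intro L hL
    induction L with
    | nil => exact hFinf
    | cons t L' ih =>
      have hpair : ∀ s ∈ L', t ≤ s := fun s hs => (List.pairwise_cons.mp hL).1 s hs
      have hL' : L'.Pairwise (· ≤ ·) := (List.pairwise_cons.mp hL).2
      have hbk := foldr_beta_kk L' Ω₀ t (fun s hs => hpair s hs)
      have ihh := ih hL'
      simp only [List.foldr_cons]
      show affRefl ((L'.foldr fold Ω₀).beta t) ((L'.foldr fold Ω₀).kk t)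
          (L'.foldr fold Ω₀).Finf = _
      rw [hbk.1, hbk.2, ihh, congrFun (hrefl t)]
      show w (affRefl (beta t) ((kk t : ℝ))
        (winv (w (L'.foldr (fun i x => affRefl (beta i) ((kk i : ℝ)) x) lamv)))) = _
      have : ∀ x : V n, winv (w x) = x := fun x => congrFun hinv.2 x
      rw [this]
  exact key _ (Finset.pairwise_sort _ _)

end Stmt5
end

section
/- In type A_{n−1}, for a strict partition λ with n−1 parts and the fixed λ-chain Γ factored as Γ_{λ₁}...Γ₂, the filling map f sending a folding pair (w,T) to the filling σ of λ with σ(i,j) = π_j(i), where π_j = w T_{λ₁} T_{λ₁−1}···T_{j+1}, surjects onto the set T(λ,n) of non-attacking fillings of λ with entries in {1,...,n}. -/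
/-!
Statement 7: In type A_{n-1}, for a strict partition λ with n-1 parts and the fixed
λ-chain Γ, the filling map f, sending a folding pair (w,T) to the filling σ of λ with
σ(i,j) = π_j(i) where π_j = w T_{λ₁} ⋯ T_{j+1}, surjects onto the set T(λ,n) of
non-attacking fillings of λ with entries in {1,…,n}.
-/

namespace Stmt7



def cells (n : ℕ) (lam : ℕ → ℕ) : Finset (ℕ × ℕ) :=
  (Finset.Icc 1 (n - 1)).biUnion fun i => {i} ×ˢ Finset.Icc 1 (lam i)

def conj (n : ℕ) (lam : ℕ → ℕ) (j : ℕ) : ℕ :=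
  ((Finset.Icc 1 (n - 1)).filter fun i => j ≤ lam i).card

/-- the row ((a,n),(a,n-1),…,(a,k+1)) of the segment Γ(k) -/
def rowG (n a k : ℕ) : List (ℕ × ℕ) :=
  ((List.Ico (k + 1) (n + 1)).reverse).map fun b => (a, b)

/-- the same row with the last root (a,k+1) removed -/
def rowG' (n a k : ℕ) : List (ℕ × ℕ) :=
  ((List.Ico (k + 2) (n + 1)).reverse).map fun b => (a, b)

/-- the segment Γ(k): rows a = k, k-1, …, 1 -/
def GammaSeg (n k : ℕ) : List (ℕ × ℕ) :=
  ((List.range k).reverse).flatMap fun a0 => rowG n (a0 + 1) k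

/-- the segment Γ'(k) -/
def GammaSeg' (n k : ℕ) : List (ℕ × ℕ) :=
  ((List.range k).reverse).flatMap fun a0 => rowG' n (a0 + 1) k

open Classical in
/-- the factor Γ_j of the λ-chain: Γ'(λ'_j) if j is minimal with its conjugate value,
Γ(λ'_j) otherwise -/
noncomputable def GammaFactor (n : ℕ) (lam : ℕ → ℕ) (j : ℕ) : List (ℕ × ℕ) :=
  if (∀ i, 1 ≤ i → conj n lam i = conj n lam j → j ≤ i) then
    GammaSeg' n (conj n lam j) else GammaSeg n (conj n lam j)

/-- the concatenation Γ_{λ₁} Γ_{λ₁ - 1} ⋯ Γ_j -/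
noncomputable def GammaDown (n : ℕ) (lam : ℕ → ℕ) (j : ℕ) : List (ℕ × ℕ) :=
  ((List.range (lam 1 + 1 - j)).reverse).flatMap fun j0 => GammaFactor n lam (j0 + j)

/-- the fixed λ-chain Γ = Γ_{λ₁} ⋯ Γ₂ -/
noncomputable def GammaChain (n : ℕ) (lam : ℕ → ℕ) : List (ℕ × ℕ) :=
  GammaDown n lam 2

/-- the product of the transpositions at the selected (global) positions of a prefix of Γ,
taken in order -/
noncomputable def prodSel (L : List (ℕ × ℕ)) (J : Finset ℕ) : Equiv.Perm ℕ :=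
  ((((List.range L.length).zip L).filter fun q => q.1 ∈ J).map fun q => Equiv.swap q.2.1 q.2.2).prod

/-- π_j = w T_{λ₁} ⋯ T_{j+1} -/
noncomputable def piPerm (n : ℕ) (lam : ℕ → ℕ) (w : Equiv.Perm ℕ) (J : Finset ℕ)
    (j : ℕ) : Equiv.Perm ℕ :=
  w * prodSel (GammaDown n lam (j + 1)) J

/-- the filling map: f(w,T)(i,j) = π_j(i) -/
noncomputable def fillingMap (n : ℕ) (lam : ℕ → ℕ) (w : Equiv.Perm ℕ) (J : Finset ℕ) :
    ℕ × ℕ → ℕ :=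
  fun c => piPerm n lam w J c.2 c.1

/-- w is a permutation of {1,…,n} (an element of S_n) -/
def IsSnPerm (n : ℕ) (w : Equiv.Perm ℕ) : Prop :=
  ∀ i : ℕ, (i ∈ Finset.Icc 1 n → w i ∈ Finset.Icc 1 n) ∧ (i ∉ Finset.Icc 1 n → w i = i)

def Attack (c d : ℕ × ℕ) : Prop :=
  c ≠ d ∧ (c.2 = d.2 ∨ (c.2 = d.2 + 1 ∧ c.1 < d.1) ∨ (d.2 = c.2 + 1 ∧ d.1 < c.1))

/-- σ is a non-attacking filling of λ with entries in {1,…,n} -/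
def IsNonAttacking (n : ℕ) (lam : ℕ → ℕ) (σ : ℕ × ℕ → ℕ) : Prop :=
  (∀ c ∈ cells n lam, σ c ∈ Finset.Icc 1 n) ∧
  (∀ c ∈ cells n lam, ∀ d ∈ cells n lam, Attack c d → σ c ≠ σ d)




open Classical in
/-- selector-function based product -/
noncomputable def pselF (f : ℕ → Prop) (L : List (ℕ × ℕ)) : Equiv.Perm ℕ :=
  match L with
  | [] => 1
  | r :: L' => (if f 0 then Equiv.swap r.1 r.2 else 1) * pselF (fun i => f (i+1)) L'

theorem pselF_nil (f : ℕ → Prop) : pselF f [] = 1 := rfl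

open Classical in
theorem pselF_cons (f : ℕ → Prop) (r : ℕ × ℕ) (L' : List (ℕ × ℕ)) :
    pselF f (r :: L') = (if f 0 then Equiv.swap r.1 r.2 else 1) * pselF (fun i => f (i+1)) L' := rfl

theorem pselF_congOn {f g : ℕ → Prop} {L : List (ℕ × ℕ)}
    (h : ∀ i < L.length, (f i ↔ g i)) : pselF f L = pselF g L := by
  classical
  induction L generalizing f g with
  | nil => rfl
  | cons r L' ih =>
      rw [pselF_cons, pselF_cons,
        ih (fun i hi => h (i+1) (by simpa using Nat.succ_lt_succ hi))]
      congr 1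
      by_cases h0 : f 0
      · rw [if_pos h0, if_pos ((h 0 (by simp)).1 h0)]
      · rw [if_neg h0, if_neg (fun hg => h0 ((h 0 (by simp)).2 hg))]

theorem pselF_append (f : ℕ → Prop) (L1 L2 : List (ℕ × ℕ)) :
    pselF f (L1 ++ L2) = pselF f L1 * pselF (fun i => f (i + L1.length)) L2 := by
  induction L1 generalizing f with
  | nil =>
      rw [List.nil_append, pselF_nil, one_mul]
      apply pselF_congOn; intro i _; simp
  | cons r L' ih =>
      rw [List.cons_append, pselF_cons, pselF_cons, ih, mul_assoc]
      have h2 : pselF (fun i => f (i + L'.length + 1)) L2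
          = pselF (fun i => f (i + (r :: L').length)) L2 := by
        apply pselF_congOn
        intro i _
        rw [show i + L'.length + 1 = i + (r :: L').length from by simp; omega]
      rw [h2]

theorem pselF_vanish {f : ℕ → Prop} {L : List (ℕ × ℕ)}
    (h : ∀ i < L.length, ¬ f i) : pselF f L = 1 := by
  induction L generalizing f with
  | nil => rfl
  | cons r L' ih =>
      rw [pselF_cons, if_neg (h 0 (by simp)), one_mul]
      exact ih (fun i hi => h (i+1) (by simpa using Nat.succ_lt_succ hi))

theorem prodSel_eq_pselF (L : List (ℕ × ℕ)) (J : Finset ℕ) :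
    prodSel L J = pselF (fun i => i ∈ J) L := by
  classical
  have key : ∀ (L : List (ℕ × ℕ)) (s : ℕ),
      ((((List.range' s L.length).zip L).filter fun q => q.1 ∈ J).map fun q => Equiv.swap q.2.1 q.2.2).prod
        = pselF (fun i => (s + i) ∈ J) L := by
    intro L
    induction L with
    | nil => intro s; rfl
    | cons r L' ih =>
        intro s
        rw [List.length_cons, List.range'_succ, List.zip_cons_cons]
        by_cases hs : s ∈ J
        · rw [List.filter_cons_of_pos (by simpa using hs)]
          simp only [List.map_cons, List.prod_cons]
          rw [pselF_cons, if_pos (by simpa using hs), ih (s+1)]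
          congr 1
          apply pselF_congOn
          intro i _
          rw [show s + 1 + i = s + (i + 1) by omega]
        · rw [List.filter_cons_of_neg (by simpa using hs)]
          rw [pselF_cons, if_neg (by simpa using hs), one_mul, ih (s+1)]
          apply pselF_congOn
          intro i _
          rw [show s + 1 + i = s + (i + 1) by omega]
  have := key L 0
  rw [prodSel, List.range_eq_range']
  simp only [Nat.zero_add] at this
  exact this

open Classical in
/-- selection by a predicate on the roots themselves -/
theorem pselF_getD (F : List (ℕ × ℕ)) (rp : ℕ × ℕ → Prop) :
    pselF (fun i => rp (F.getD i (0,0))) F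
      = ((F.filter (fun q => decide (rp q))).map fun q => Equiv.swap q.1 q.2).prod := by
  induction F with
  | nil => rfl
  | cons r F' ih =>
      rw [pselF_cons]
      simp only [List.getD_cons_succ, List.getD_cons_zero]
      by_cases hr : rp r
      · rw [List.filter_cons_of_pos (by simpa using hr)]
        simp only [List.map_cons, List.prod_cons]
        rw [if_pos (by simpa using hr), ih]
      · rw [List.filter_cons_of_neg (by simpa using hr), if_neg (by simpa using hr), one_mul]
        exact ih


section
variable {n : ℕ} {lam : ℕ → ℕ}

theorem lam_strict_anti (hstrict : ∀ i, 1 ≤ i → i < n - 1 → lam (i + 1) < lam i)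
    {a b : ℕ} (ha : 1 ≤ a) (hab : a < b) (hb : b ≤ n - 1) : lam b < lam a := by
  induction b with
  | zero => omega
  | succ b ih =>
      rcases Nat.lt_or_ge a b with h | h
      · exact lt_trans (hstrict b (by omega) (by omega)) (ih h (by omega))
      · have : a = b := by omega
        subst this
        exact hstrict a ha (by omega)

theorem lam_anti (hstrict : ∀ i, 1 ≤ i → i < n - 1 → lam (i + 1) < lam i)
    {a b : ℕ} (ha : 1 ≤ a) (hab : a ≤ b) (hb : b ≤ n - 1) : lam b ≤ lam a := by
  rcases Nat.lt_or_ge a b with h | h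
  · exact le_of_lt (lam_strict_anti hstrict ha h hb)
  · have : a = b := by omega
    subst this; rfl

theorem le_conj_iff (hstrict : ∀ i, 1 ≤ i → i < n - 1 → lam (i + 1) < lam i)
    {i j : ℕ} (hi1 : 1 ≤ i) (hi2 : i ≤ n - 1) :
    i ≤ conj n lam j ↔ j ≤ lam i := by
  classical
  set S := (Finset.Icc 1 (n - 1)).filter fun i => j ≤ lam i with hS
  constructor
  · intro h
    by_contra hc
    push_neg at hc
    have hsub : S ⊆ Finset.Icc 1 (i - 1) := by
      intro s hs
      simp only [hS, Finset.mem_filter, Finset.mem_Icc] at hs ⊢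
      refine ⟨hs.1.1, ?_⟩
      by_contra hsi
      push_neg at hsi
      have : lam s ≤ lam i := lam_anti hstrict hi1 (by omega) hs.1.2
      omega
    have := Finset.card_le_card hsub
    rw [Nat.card_Icc] at this
    have : conj n lam j ≤ i - 1 := le_trans (le_of_eq rfl) (by simpa [conj] using this)
    omega
  · intro h
    have hsub : Finset.Icc 1 i ⊆ S := by
      intro s hs
      simp only [Finset.mem_Icc] at hs
      simp only [hS, Finset.mem_filter, Finset.mem_Icc]
      exact ⟨⟨hs.1, by omega⟩, le_trans h (lam_anti hstrict hs.1 hs.2 hi2)⟩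
    have := Finset.card_le_card hsub
    rw [Nat.card_Icc] at this
    simpa [conj] using this

theorem conj_le (n : ℕ) (lam : ℕ → ℕ) (j : ℕ) : conj n lam j ≤ n - 1 := by
  classical
  have := Finset.card_le_card (Finset.filter_subset (fun i => j ≤ lam i) (Finset.Icc 1 (n-1)))
  simpa [conj, Nat.card_Icc] using this

theorem conj_anti (n : ℕ) (lam : ℕ → ℕ) {j j' : ℕ} (h : j ≤ j') :
    conj n lam j' ≤ conj n lam j := by
  classical
  apply Finset.card_le_card
  intro s hs
  simp only [Finset.mem_filter] at hs ⊢
  exact ⟨hs.1, le_trans h hs.2⟩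

theorem conj_one (hstrict : ∀ i, 1 ≤ i → i < n - 1 → lam (i + 1) < lam i)
    (hn : 2 ≤ n) (hpos : 0 < lam (n - 1)) : conj n lam 1 = n - 1 := by
  classical
  have : ((Finset.Icc 1 (n - 1)).filter fun i => 1 ≤ lam i) = Finset.Icc 1 (n-1) := by
    apply Finset.filter_true_of_mem
    intro i hi
    simp only [Finset.mem_Icc] at hi
    have := lam_anti hstrict hi.1 hi.2 (le_refl (n-1))
    omega
  simp [conj, this, Nat.card_Icc]

theorem conj_pos (hstrict : ∀ i, 1 ≤ i → i < n - 1 → lam (i + 1) < lam i)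
    (hn : 2 ≤ n) {j : ℕ} (hj : j ≤ lam 1) : 1 ≤ conj n lam j := by
  rw [le_conj_iff hstrict (by omega) (by omega)]
  exact hj

theorem conj_gap (hstrict : ∀ i, 1 ≤ i → i < n - 1 → lam (i + 1) < lam i)
    {j : ℕ} (hj : 1 ≤ j) : conj n lam j ≤ conj n lam (j+1) + 1 := by
  classical
  have hsub : ((Finset.Icc 1 (n - 1)).filter fun i => j ≤ lam i) ⊆
      ((Finset.Icc 1 (n - 1)).filter fun i => j+1 ≤ lam i) ∪
      ((Finset.Icc 1 (n - 1)).filter fun i => lam i = j) := by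
    intro s hs
    simp only [Finset.mem_filter, Finset.mem_union] at hs ⊢
    rcases Nat.lt_or_ge (lam s) (j+1) with h | h
    · exact Or.inr ⟨hs.1, by omega⟩
    · exact Or.inl ⟨hs.1, h⟩
  have h1 := Finset.card_le_card hsub
  have h2 := Finset.card_union_le
    ((Finset.Icc 1 (n - 1)).filter fun i => j+1 ≤ lam i)
    ((Finset.Icc 1 (n - 1)).filter fun i => lam i = j)
  have h3 : ((Finset.Icc 1 (n - 1)).filter fun i => lam i = j).card ≤ 1 := by
    apply Finset.card_le_one.mpr
    intro a ha b hb
    simp only [Finset.mem_filter, Finset.mem_Icc] at ha hb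
    by_contra hab
    rcases Nat.lt_or_ge a b with h | h
    · have := lam_strict_anti hstrict ha.1.1 h hb.1.2; omega
    · have hba : b < a := by omega
      have := lam_strict_anti hstrict hb.1.1 hba ha.1.2; omega
  simp only [conj]
  omega

end




/-- the chain-end function: follow a ↦ p a while it decreases -/
def ce (p : ℕ → ℕ) : ℕ → ℕ := fun a =>
  if h : p a < a then ce p (p a) else a
  termination_by a => a

theorem ce_of_not {p : ℕ → ℕ} {a : ℕ} (h : ¬ p a < a) : ce p a = a := by
  rw [ce, dif_neg h]

theorem ce_of_lt {p : ℕ → ℕ} {a : ℕ} (h : p a < a) : ce p a = ce p (p a) := by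
  rw [ce, dif_pos h]

inductive ReachP (p : ℕ → ℕ) : ℕ → ℕ → Prop
  | refl (a : ℕ) : ReachP p a a
  | step {a x : ℕ} : p a < a → ReachP p (p a) x → ReachP p a x

theorem reach_le {p : ℕ → ℕ} {a x : ℕ} (h : ReachP p a x) : x ≤ a := by
  induction h with
  | refl => exact le_refl _
  | step h1 _ ih => omega

theorem reach_ce (p : ℕ → ℕ) (a : ℕ) : ReachP p a (ce p a) := by
  by_cases h : p a < a
  · rw [ce_of_lt h]
    exact ReachP.step h (reach_ce p (p a))
  · rw [ce_of_not h]
    exact ReachP.refl a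
  termination_by a

theorem ce_le (p : ℕ → ℕ) (a : ℕ) : ce p a ≤ a := reach_le (reach_ce p a)

section
variable {p : ℕ → ℕ} {k m' nn : ℕ}
variable (Hrange : ∀ a, 1 ≤ a → a ≤ k → (1 ≤ p a ∧ p a ≤ nn ∧ (p a ≤ a ∨ m' ≤ p a)))
variable (Hinj : ∀ a b, 1 ≤ a → a ≤ k → 1 ≤ b → b ≤ k → p a = p b → a = b)
variable (Hkm : k < m')

include Hrange in
theorem reach_bounds {a x : ℕ} (h : ReachP p a x) (ha1 : 1 ≤ a) (hak : a ≤ k) :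
    1 ≤ x ∧ x ≤ k := by
  induction h with
  | refl a => exact ⟨ha1, hak⟩
  | step h1 h2 ih =>
      rename_i a' x'
      have := Hrange a' ha1 hak
      exact ih (by omega) (by omega)

include Hrange in
theorem ce_bounds {a : ℕ} (ha1 : 1 ≤ a) (hak : a ≤ k) :
    1 ≤ ce p a ∧ ce p a ≤ k :=
  reach_bounds Hrange (reach_ce p a) ha1 hak

include Hrange Hinj in
theorem p_p_ne {a : ℕ} (ha1 : 1 ≤ a) (hak : a ≤ k) (h : p a < a) : p (p a) ≠ p a := by
  intro hc
  have h1 := Hrange a ha1 hak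
  have := Hinj (p a) a (by omega) (by omega) ha1 hak (by omega)
  omega

include Hrange Hinj in
theorem bf_upper {a : ℕ} (ha1 : 1 ≤ a) (hak : a ≤ k) (hne : p a ≠ a) :
    m' ≤ p (ce p a) ∧ p (ce p a) ≤ nn := by
  by_cases h : p a < a
  · rw [ce_of_lt h]
    have h1 := Hrange a ha1 hak
    exact bf_upper (by omega) (by omega) (p_p_ne Hrange Hinj ha1 hak h)
  · rw [ce_of_not h]
    have h1 := Hrange a ha1 hak
    refine ⟨?_, h1.2.1⟩
    rcases h1.2.2 with h2 | h2
    · omega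
    · exact h2
  termination_by a

theorem reach_pred {t x : ℕ} (h : ReachP p t x) (hne : x ≠ t) :
    ∃ u, ReachP p t u ∧ p u < u ∧ p u = x := by
  induction h with
  | refl a => exact absurd rfl hne
  | step h1 h2 ih =>
      rename_i a' x'
      by_cases hx : x' = p a'
      · exact ⟨a', ReachP.refl a', h1, hx.symm⟩
      · obtain ⟨u, hu1, hu2, hu3⟩ := ih hx
        exact ⟨u, ReachP.step h1 hu1, hu2, hu3⟩

include Hrange Hinj in
theorem K_wlog (a : ℕ) (ha1 : 1 ≤ a) (hak : a ≤ k) (t : ℕ) (ht1 : 1 ≤ t) (htk : t ≤ k)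
    (hta : t ≤ a) (hce : ce p t = ce p a) : ReachP p a t := by
  rcases Nat.eq_or_lt_of_le hta with heq | hlt
  · subst heq; exact ReachP.refl _
  · by_cases hpa : p a < a
    · have hpa1 : 1 ≤ p a := (Hrange a ha1 hak).1
      have hpak : p a ≤ k := by omega
      have hcepa : ce p (p a) = ce p a := (ce_of_lt hpa).symm
      rcases le_or_gt t (p a) with h | h
      · exact ReachP.step hpa (K_wlog (p a) hpa1 hpak t ht1 htk h (by omega))
      · -- p a < t < a : derive contradiction
        have hrtpa : ReachP p t (p a) :=
          K_wlog t ht1 htk (p a) hpa1 hpak (by omega) (by omega)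
        have hne : p a ≠ t := by omega
        obtain ⟨u, hu1, hu2, hu3⟩ := reach_pred hrtpa hne
        have hub := reach_bounds Hrange hu1 ht1 htk
        have : u = a := Hinj u a hub.1 hub.2 ha1 hak (by omega)
        have := reach_le hu1
        omega
    · have h1 : ce p a = a := ce_of_not hpa
      have h2 := ce_le p t
      omega
  termination_by a

include Hrange Hinj in
theorem not_ce_eq_between {a t : ℕ} (ha1 : 1 ≤ a) (hak : a ≤ k) (hpa : p a < a)
    (ht1 : p a < t) (hta : t < a) (htk : t ≤ k) : ce p t ≠ ce p a := by
  intro hce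
  have hr := K_wlog Hrange Hinj a ha1 hak t (by omega) htk (by omega) hce
  cases hr with
  | refl => omega
  | step h1 h2 =>
      have := reach_le h2
      omega

open Classical in
/-- the stage permutation for row a -/
noncomputable def gStage (p : ℕ → ℕ) (k : ℕ) (a : ℕ) : Equiv.Perm ℕ :=
  if 1 ≤ a ∧ a ≤ k ∧ p a ≠ a then Equiv.swap a (p (ce p a)) else 1

/-- partial products of stages: C t = g t * ... * g 1 -/
noncomputable def Cprod (p : ℕ → ℕ) (k : ℕ) : ℕ → Equiv.Perm ℕ
  | 0 => 1
  | t+1 => gStage p k (t+1) * Cprod p k t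

theorem gStage_fix {a x : ℕ} (hx1 : x ≠ a) (hx2 : x ≠ p (ce p a)) :
    gStage p k a x = x := by
  classical
  rw [gStage]
  split
  · rw [Equiv.swap_apply_of_ne_of_ne hx1 hx2]
  · rfl

theorem gStage_fix' {a x : ℕ} (h : ¬ (1 ≤ a ∧ a ≤ k ∧ p a ≠ a)) :
    gStage p k a x = x := by
  classical
  rw [gStage, if_neg h]
  rfl

theorem Cprod_fix_from {t0 t1 x y : ℕ} (h01 : t0 ≤ t1)
    (hfix : ∀ t, t0 < t → t ≤ t1 → gStage p k t x = x) (hx : Cprod p k t0 y = x) :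
    Cprod p k t1 y = x := by
  induction t1 with
  | zero =>
      have : t0 = 0 := by omega
      subst this; exact hx
  | succ t ih =>
      rcases Nat.eq_or_lt_of_le h01 with heq | hlt
      · subst heq; exact hx
      · have h1 : Cprod p k t y = x := ih (by omega) (fun t' h' h'' => hfix t' h' (by omega))
        show gStage p k (t+1) (Cprod p k t y) = x
        rw [h1]
        exact hfix (t+1) (by omega) (le_refl _)

theorem Cprod_succ_apply {t : ℕ} (ht : 1 ≤ t) (y : ℕ) :
    Cprod p k t y = gStage p k t (Cprod p k (t-1) y) := by
  obtain ⟨s, rfl⟩ : ∃ s, t = s + 1 := ⟨t - 1, by omega⟩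
  rfl

include Hrange Hinj Hkm in
theorem Cprod_main {a : ℕ} (ha1 : 1 ≤ a) (hak : a ≤ k) :
    Cprod p k k (p a) = a := by
  classical
  -- stages strictly above a fix a
  have habove : ∀ t, a < t → t ≤ k → gStage p k t a = a := by
    intro t h1 h2
    by_cases hD : 1 ≤ t ∧ t ≤ k ∧ p t ≠ t
    · apply gStage_fix (by omega)
      have := bf_upper Hrange Hinj hD.1 hD.2.1 hD.2.2
      omega
    · exact gStage_fix' hD
  have key : Cprod p k a (p a) = a := by
    rcases Nat.lt_trichotomy (p a) a with hlt | heq | hgt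
    · -- case p a < a
      have hpa1 : 1 ≤ p a := (Hrange a ha1 hak).1
      have hpaD : p (p a) ≠ p a := p_p_ne Hrange Hinj ha1 hak hlt
      have hbfpa : p (ce p (p a)) = p (ce p a) := by rw [← ce_of_lt hlt]
      have hbfa := bf_upper Hrange Hinj ha1 hak (by omega)
      -- below p a : fixes p a
      have h1 : Cprod p k (p a - 1) (p a) = p a := by
        apply Cprod_fix_from (x := p a) (Nat.zero_le _) _ rfl
        intro t h1 h2
        by_cases hD : 1 ≤ t ∧ t ≤ k ∧ p t ≠ t
        · apply gStage_fix (by omega)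
          have := bf_upper Hrange Hinj hD.1 hD.2.1 hD.2.2
          omega
        · exact gStage_fix' hD
      -- stage p a : p a ↦ bf a
      have h2 : Cprod p k (p a) (p a) = p (ce p a) := by
        rw [Cprod_succ_apply hpa1, h1, gStage, if_pos ⟨hpa1, by omega, hpaD⟩,
          Equiv.swap_apply_left, hbfpa]
      -- stages in (p a, a - 1] fix bf a
      have h3 : Cprod p k (a - 1) (p a) = p (ce p a) := by
        have := Cprod_fix_from (t0 := p a) (t1 := a - 1) (x := p (ce p a)) (by omega) ?_ h2
        · exact this
        · intro t ht1 ht2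
          by_cases hD : 1 ≤ t ∧ t ≤ k ∧ p t ≠ t
          · apply gStage_fix (by omega)
            intro hc
            have hcet := ce_bounds Hrange hD.1 hD.2.1
            have hcea := ce_bounds Hrange ha1 hak
            have : ce p t = ce p a := Hinj _ _ hcet.1 hcet.2 hcea.1 hcea.2 hc.symm
            exact not_ce_eq_between Hrange Hinj ha1 hak hlt ht1 (by omega) hD.2.1 this
          · exact gStage_fix' hD
      -- stage a : bf a ↦ a
      rw [Cprod_succ_apply ha1, h3, gStage, if_pos ⟨ha1, hak, by omega⟩,
        Equiv.swap_apply_right]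
    · -- case p a = a
      have h1 : Cprod p k (a - 1) (p a) = a := by
        rw [heq]
        apply Cprod_fix_from (x := a) (Nat.zero_le _) _ rfl
        intro t h1 h2
        by_cases hD : 1 ≤ t ∧ t ≤ k ∧ p t ≠ t
        · apply gStage_fix (by omega)
          have := bf_upper Hrange Hinj hD.1 hD.2.1 hD.2.2
          omega
        · exact gStage_fix' hD
      rw [Cprod_succ_apply ha1, h1]
      exact gStage_fix' (fun h => h.2.2 heq)
    · -- case p a > a, so m' ≤ p a
      have hm : m' ≤ p a := by
        have := (Hrange a ha1 hak).2.2
        omega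
      have hcea : ce p a = a := ce_of_not (by omega)
      have h1 : Cprod p k (a - 1) (p a) = p a := by
        apply Cprod_fix_from (x := p a) (Nat.zero_le _) _ rfl
        intro t h1 h2
        by_cases hD : 1 ≤ t ∧ t ≤ k ∧ p t ≠ t
        · apply gStage_fix (by omega)
          intro hc
          have hcet := ce_bounds Hrange hD.1 hD.2.1
          have : ce p t = a := Hinj _ _ hcet.1 hcet.2 ha1 hak (by rw [← hc])

          have := ce_le p t
          omega
        · exact gStage_fix' hD
      rw [Cprod_succ_apply ha1, h1, gStage, if_pos ⟨ha1, hak, by omega⟩, hcea,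
        Equiv.swap_apply_right]
  exact Cprod_fix_from hak habove key

end



theorem mem_cells {n : ℕ} {lam : ℕ → ℕ} {c : ℕ × ℕ} :
    c ∈ cells n lam ↔ 1 ≤ c.1 ∧ c.1 ≤ n - 1 ∧ 1 ≤ c.2 ∧ c.2 ≤ lam c.1 := by
  cases c with
  | mk i j =>
      constructor
      · intro h
        simp only [cells, Finset.mem_biUnion] at h
        obtain ⟨a, ha, hc⟩ := h
        rw [Finset.mem_product] at hc
        simp only [Finset.mem_singleton] at hc
        simp only [Finset.mem_Icc] at ha hc
        obtain ⟨h1, h2⟩ := hc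
        subst h1
        exact ⟨ha.1, ha.2, h2.1, h2.2⟩
      · rintro ⟨h1, h2, h3, h4⟩
        simp only [cells, Finset.mem_biUnion]
        refine ⟨i, Finset.mem_Icc.mpr ⟨h1, h2⟩, ?_⟩
        rw [Finset.mem_product]
        exact ⟨Finset.mem_singleton_self i, Finset.mem_Icc.mpr ⟨h3, h4⟩⟩

theorem GammaDown_top (n : ℕ) (lam : ℕ → ℕ) : GammaDown n lam (lam 1 + 1) = [] := by
  simp [GammaDown]

theorem GammaDown_succ (n : ℕ) (lam : ℕ → ℕ) {j : ℕ} (hj : j ≤ lam 1) :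
    GammaDown n lam j = GammaDown n lam (j + 1) ++ GammaFactor n lam j := by
  have hs : lam 1 + 1 - j = (lam 1 - j) + 1 := by omega
  have hs2 : lam 1 + 1 - (j + 1) = lam 1 - j := by omega
  rw [GammaDown, GammaDown, hs, hs2, List.range_succ_eq_map, List.reverse_cons,
    List.flatMap_append]
  congr 1
  · rw [← List.map_reverse, List.flatMap_map]
    apply List.flatMap_congr
    intro x _
    congr 1
    omega
  · simp



-- ===== more auxiliary lemmas =====

section
variable {n : ℕ} {lam : ℕ → ℕ}

theorem minimal_iff (hj : 1 ≤ j) :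
    (∀ i, 1 ≤ i → conj n lam i = conj n lam (j+1) → j+1 ≤ i) ↔
      conj n lam j ≠ conj n lam (j+1) := by
  constructor
  · intro h heq
    have := h j hj heq
    omega
  · intro hne i hi heq
    by_contra hc
    push_neg at hc
    have h1 : conj n lam j ≤ conj n lam i := conj_anti n lam (by omega)
    have h2 : conj n lam (j+1) ≤ conj n lam j := conj_anti n lam (by omega)
    omega

theorem factor_structure (hstrict : ∀ i, 1 ≤ i → i < n - 1 → lam (i + 1) < lam i)
    {j : ℕ} (hj : 1 ≤ j) :
    GammaFactor n lam (j+1) =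
      ((List.range (conj n lam (j+1))).reverse).flatMap fun a0 =>
        ((List.Ico (conj n lam j + 1) (n + 1)).reverse).map fun b => (a0 + 1, b) := by
  classical
  have hanti : conj n lam (j+1) ≤ conj n lam j := conj_anti n lam (by omega)
  have hgap : conj n lam j ≤ conj n lam (j+1) + 1 := conj_gap hstrict hj
  by_cases hmin : (∀ i, 1 ≤ i → conj n lam i = conj n lam (j+1) → j+1 ≤ i)
  · rw [GammaFactor, if_pos hmin]
    have hne := (minimal_iff hj).mp hmin
    have : conj n lam j = conj n lam (j+1) + 1 := by omega
    rw [GammaSeg']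
    apply List.flatMap_congr
    intro a0 _
    rw [rowG', show conj n lam (j+1) + 2 = conj n lam j + 1 from by omega]
  · rw [GammaFactor, if_neg hmin]
    have : ¬ (conj n lam j ≠ conj n lam (j+1)) := fun h => hmin ((minimal_iff hj).mpr h)
    have heq : conj n lam j = conj n lam (j+1) := by omega
    rw [GammaSeg]
    apply List.flatMap_congr
    intro a0 _
    rw [rowG, show conj n lam (j+1) + 1 = conj n lam j + 1 from by omega]

theorem GammaDown_prefix (d : ℕ) : ∀ j', 1 ≤ j' → j' + d ≤ lam 1 + 1 →
    ∃ M, GammaDown n lam j' = GammaDown n lam (j' + d) ++ M := by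
  induction d with
  | zero => intro j' _ _; exact ⟨[], by simp⟩
  | succ d ih =>
      intro j' h1 h2
      obtain ⟨M, hM⟩ := ih j' h1 (by omega)
      have hstep : GammaDown n lam (j' + d) =
          GammaDown n lam (j' + d + 1) ++ GammaFactor n lam (j' + d) :=
        GammaDown_succ n lam (by omega)
      refine ⟨GammaFactor n lam (j' + d) ++ M, ?_⟩
      rw [hM, hstep, show j' + (d+1) = j' + d + 1 by omega, List.append_assoc]

end

section
variable {n : ℕ}

theorem isSn_one : IsSnPerm n 1 :=
  fun i => ⟨fun h => by simpa using h, fun _ => rfl⟩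

theorem isSn_mul {w1 w2 : Equiv.Perm ℕ} (h1 : IsSnPerm n w1) (h2 : IsSnPerm n w2) :
    IsSnPerm n (w1 * w2) := by
  intro i
  constructor
  · intro hi
    rw [Equiv.Perm.mul_apply]
    exact (h1 (w2 i)).1 ((h2 i).1 hi)
  · intro hi
    rw [Equiv.Perm.mul_apply, (h2 i).2 hi, (h1 i).2 hi]

theorem isSn_inv {w : Equiv.Perm ℕ} (h : IsSnPerm n w) : IsSnPerm n w⁻¹ := by
  intro i
  constructor
  · intro hi
    by_contra hc
    have := (h (w⁻¹ i)).2 hc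
    rw [show w (w⁻¹ i) = i from Equiv.apply_symm_apply w i] at this
    rw [this] at hi
    exact hc hi
  · intro hi
    have := (h i).2 hi
    conv_lhs => rw [← this]
    exact Equiv.symm_apply_apply w i

theorem isSn_swap {x y : ℕ} (hx : x ∈ Finset.Icc 1 n) (hy : y ∈ Finset.Icc 1 n) :
    IsSnPerm n (Equiv.swap x y) := by
  intro i
  constructor
  · intro hi
    rcases eq_or_ne i x with rfl | hix
    · rwa [Equiv.swap_apply_left]
    · rcases eq_or_ne i y with rfl | hiy
      · rwa [Equiv.swap_apply_right]
      · rwa [Equiv.swap_apply_of_ne_of_ne hix hiy]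
  · intro hi
    have hix : i ≠ x := fun hc => hi (hc ▸ hx)
    have hiy : i ≠ y := fun hc => hi (hc ▸ hy)
    exact Equiv.swap_apply_of_ne_of_ne hix hiy

end

theorem filter_eq_singleton {L : List ℕ} (hnd : L.Nodup) {x : ℕ} (hx : x ∈ L) :
    L.filter (fun b => decide (b = x)) = [x] := by
  induction L with
  | nil => cases hx
  | cons a L' ih =>
      rcases List.mem_cons.mp hx with h1 | hxl
      · subst h1
        rw [List.filter_cons_of_pos (by simp)]
        have hnm : x ∉ L' := (List.nodup_cons.mp hnd).1
        have h2 : List.filter (fun b => decide (b = x)) L' = [] :=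
          List.filter_eq_nil_iff.mpr (fun b hb hbe => hnm (by
            simp only [decide_eq_true_eq] at hbe
            exact hbe ▸ hb))
        rw [h2]
      · have hne : a ≠ x := by
          rintro rfl
          exact (List.nodup_cons.mp hnd).1 hxl
        rw [List.filter_cons_of_neg (by simpa using hne)]
        exact ih (List.nodup_cons.mp hnd).2 hxl

section
variable {p : ℕ → ℕ} {k m' nn : ℕ}
variable (Hrange : ∀ a, 1 ≤ a → a ≤ k → (1 ≤ p a ∧ p a ≤ nn ∧ (p a ≤ a ∨ m' ≤ p a)))
variable (Hinj : ∀ a b, 1 ≤ a → a ≤ k → 1 ≤ b → b ≤ k → p a = p b → a = b)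
variable (Hkm : k < m')

include Hrange Hinj Hkm in
theorem isSn_Cprod (hn : nn ≤ n) (hk : k ≤ n) (t : ℕ) : IsSnPerm n (Cprod p k t) := by
  classical
  induction t with
  | zero => exact isSn_one
  | succ t ih =>
      have hg : IsSnPerm n (gStage p k (t+1)) := by
        rw [gStage]
        split
        · rename_i hD
          have hb := bf_upper Hrange Hinj hD.1 hD.2.1 hD.2.2
          apply isSn_swap
          · rw [Finset.mem_Icc]; omega
          · rw [Finset.mem_Icc]; omega
        · exact isSn_one
      exact isSn_mul hg ih

open Classical in
include Hrange Hinj Hkm in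
theorem factor_prod :
    ((List.filter (fun q => decide (1 ≤ q.1 ∧ q.1 ≤ k ∧ p q.1 ≠ q.1 ∧ q.2 = p (ce p q.1)))
        (((List.range k).reverse).flatMap fun a0 =>
          ((List.Ico m' (nn + 1)).reverse).map fun b => (a0 + 1, b))).map
            fun q => Equiv.swap q.1 q.2).prod = Cprod p k k := by
  rw [List.filter_flatMap]
  have hrows : ∀ a0 ∈ (List.range k).reverse,
      (List.filter (fun q => decide (1 ≤ q.1 ∧ q.1 ≤ k ∧ p q.1 ≠ q.1 ∧ q.2 = p (ce p q.1)))
        (((List.Ico m' (nn + 1)).reverse).map fun b => (a0 + 1, b)))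
      = if 1 ≤ a0+1 ∧ a0+1 ≤ k ∧ p (a0+1) ≠ a0+1 then [(a0+1, p (ce p (a0+1)))] else [] := by
    intro a0 ha0
    rw [List.mem_reverse, List.mem_range] at ha0
    rw [List.filter_map]
    by_cases hD : 1 ≤ a0+1 ∧ a0+1 ≤ k ∧ p (a0+1) ≠ a0+1
    · rw [if_pos hD]
      have hfc : List.filter ((fun q => decide (1 ≤ q.1 ∧ q.1 ≤ k ∧ p q.1 ≠ q.1 ∧
            q.2 = p (ce p q.1))) ∘ fun b => (a0 + 1, b)) ((List.Ico m' (nn + 1)).reverse)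
          = List.filter (fun b => decide (b = p (ce p (a0+1)))) ((List.Ico m' (nn + 1)).reverse) := by
        apply List.filter_congr
        intro b _
        simp only [Function.comp_apply, decide_eq_decide]
        constructor
        · intro h; exact h.2.2.2
        · intro h; exact ⟨hD.1, hD.2.1, hD.2.2, h⟩
      rw [hfc]
      have hb := bf_upper Hrange Hinj hD.1 hD.2.1 hD.2.2
      rw [filter_eq_singleton (List.nodup_reverse.mpr (List.Ico.nodup _ _))
        (by rw [List.mem_reverse, List.Ico.mem]; omega)]
      rfl
    · rw [if_neg hD]
      have h0 : List.filter ((fun q => decide (1 ≤ q.1 ∧ q.1 ≤ k ∧ p q.1 ≠ q.1 ∧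
            q.2 = p (ce p q.1))) ∘ fun b => (a0 + 1, b)) ((List.Ico m' (nn + 1)).reverse) = [] := by
        apply List.filter_eq_nil_iff.mpr
        intro b _
        simp only [Function.comp_apply, decide_eq_true_eq]
        intro hc
        exact hD ⟨hc.1, hc.2.1, hc.2.2.1⟩
      rw [h0, List.map_nil]
  rw [List.flatMap_congr hrows]
  have key : ∀ t, ((((List.range t).reverse).flatMap (fun a0 =>
      if 1 ≤ a0+1 ∧ a0+1 ≤ k ∧ p (a0+1) ≠ a0+1 then [(a0+1, p (ce p (a0+1)))] else [])).map
        fun q => Equiv.swap q.1 q.2).prod = Cprod p k t := by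
    intro t
    induction t with
    | zero => rfl
    | succ t ih =>
        rw [List.range_succ, List.reverse_append, List.reverse_singleton,
          List.singleton_append, List.flatMap_cons, List.map_append, List.prod_append, ih]
        have hr : Cprod p k (t+1) = gStage p k (t+1) * Cprod p k t := rfl
        rw [hr]
        congr 1
        by_cases hD : 1 ≤ t+1 ∧ t+1 ≤ k ∧ p (t+1) ≠ t+1
        · rw [if_pos hD, gStage, if_pos hD]
          simp
        · rw [if_neg hD, gStage, if_neg hD]
          simp
  exact key k
end


theorem exists_extension {n : ℕ} (hn : 2 ≤ n) (v : ℕ → ℕ)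
    (hv1 : ∀ i, 1 ≤ i → i ≤ n - 1 → v i ∈ Finset.Icc 1 n)
    (hv2 : ∀ i i', 1 ≤ i → i ≤ n - 1 → 1 ≤ i' → i' ≤ n - 1 → v i = v i' → i = i') :
    ∃ π : Equiv.Perm ℕ, IsSnPerm n π ∧ ∀ i, 1 ≤ i → i ≤ n - 1 → π i = v i := by
  classical
  set S : Finset ℕ := (Finset.Icc 1 n) \ ((Finset.Icc 1 (n-1)).image v) with hS
  have hvinj : Set.InjOn v (Finset.Icc 1 (n-1)) := by
    intro x hx y hy hxy
    rw [Finset.mem_coe, Finset.mem_Icc] at hx hy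
    exact hv2 x y hx.1 hx.2 hy.1 hy.2 hxy
  have himgcard : ((Finset.Icc 1 (n-1)).image v).card = n - 1 := by
    rw [Finset.card_image_of_injOn hvinj, Nat.card_Icc]
    omega
  have hSne : S.Nonempty := by
    have hsub : ((Finset.Icc 1 (n-1)).image v) ⊆ Finset.Icc 1 n := by
      intro x hx
      rw [Finset.mem_image] at hx
      obtain ⟨i, hi, rfl⟩ := hx
      rw [Finset.mem_Icc] at hi
      exact hv1 i hi.1 hi.2
    have := Finset.card_sdiff_of_subset hsub
    rw [himgcard, Nat.card_Icc] at this
    rw [← Finset.card_pos, hS, this]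
    omega
  obtain ⟨m0, hm0⟩ := hSne
  have hm0Icc : m0 ∈ Finset.Icc 1 n := (Finset.mem_sdiff.mp hm0).1
  have hm0nimg : m0 ∉ (Finset.Icc 1 (n-1)).image v := (Finset.mem_sdiff.mp hm0).2
  set g : {x // x ∈ Finset.Icc 1 n} → {x // x ∈ Finset.Icc 1 n} := fun x =>
    if h : x.1 ≤ n - 1 then
      ⟨v x.1, hv1 x.1 (Finset.mem_Icc.mp x.2).1 h⟩
    else ⟨m0, hm0Icc⟩ with hg
  have hginj : Function.Injective g := by
    intro x y hxy
    rw [hg] at hxy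
    simp only at hxy
    by_cases hx : x.1 ≤ n - 1 <;> by_cases hy : y.1 ≤ n - 1
    · rw [dif_pos hx, dif_pos hy] at hxy
      have := hv2 x.1 y.1 (Finset.mem_Icc.mp x.2).1 hx (Finset.mem_Icc.mp y.2).1 hy
        (congrArg Subtype.val hxy)
      exact Subtype.ext this
    · rw [dif_pos hx, dif_neg hy] at hxy
      exfalso
      apply hm0nimg
      rw [Finset.mem_image]
      exact ⟨x.1, Finset.mem_Icc.mpr ⟨(Finset.mem_Icc.mp x.2).1, hx⟩,
        (congrArg Subtype.val hxy)⟩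
    · rw [dif_neg hx, dif_pos hy] at hxy
      exfalso
      apply hm0nimg
      rw [Finset.mem_image]
      exact ⟨y.1, Finset.mem_Icc.mpr ⟨(Finset.mem_Icc.mp y.2).1, hy⟩,
        (congrArg Subtype.val hxy).symm⟩
    · apply Subtype.ext
      have hx2 := Finset.mem_Icc.mp x.2
      have hy2 := Finset.mem_Icc.mp y.2
      omega
  have hgbij : Function.Bijective g := Finite.injective_iff_bijective.mp hginj
  set e : Equiv.Perm {x // x ∈ Finset.Icc 1 n} := Equiv.ofBijective g hgbij with he
  set π : Equiv.Perm ℕ := e.extendDomain (Equiv.refl _) with hπ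
  have happ : ∀ (i : ℕ) (h : i ∈ Finset.Icc 1 n), π i = (g ⟨i, h⟩).1 := by
    intro i h
    rw [hπ, Equiv.Perm.extendDomain_apply_subtype e (Equiv.refl _) h]
    rfl
  have hfix : ∀ (i : ℕ), i ∉ Finset.Icc 1 n → π i = i := by
    intro i h
    rw [hπ, Equiv.Perm.extendDomain_apply_not_subtype e (Equiv.refl _) h]
  refine ⟨π, ?_, ?_⟩
  · intro i
    constructor
    · intro hi
      rw [happ i hi]
      exact (g ⟨i, hi⟩).2
    · exact hfix i
  · intro i h1 h2
    have hi : i ∈ Finset.Icc 1 n := Finset.mem_Icc.mpr ⟨h1, by omega⟩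
    rw [happ i hi, hg]
    simp only
    rw [dif_pos h2]


theorem P_aux (n : ℕ) (lam : ℕ → ℕ) (hn : 2 ≤ n)
    (hstrict : ∀ i, 1 ≤ i → i < n - 1 → lam (i + 1) < lam i)
    (hpos : 0 < lam (n - 1))
    (σ : ℕ × ℕ → ℕ) (hσ : IsNonAttacking n lam σ) :
    ∀ d, 1 + d ≤ lam 1 →
      ∃ (π : Equiv.Perm ℕ) (J : Finset ℕ), IsSnPerm n π ∧
        (∀ i ∈ J, (GammaDown n lam (1 + d + 1)).length ≤ i ∧
          i < (GammaDown n lam 2).length) ∧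
        (∀ j' i, 1 ≤ j' → j' ≤ 1 + d → 1 ≤ i → i ≤ conj n lam j' →
          (π * prodSel (GammaDown n lam (j' + 1)) J) i = σ (i, j')) := by
  classical
  have hcell : ∀ i j, 1 ≤ i → i ≤ n - 1 → 1 ≤ j → j ≤ lam i → (i, j) ∈ cells n lam :=
    fun i j h1 h2 h3 h4 => mem_cells.mpr ⟨h1, h2, h3, h4⟩
  have hlam1 : ∀ i, 1 ≤ i → i ≤ n - 1 → 1 ≤ lam i := by
    intro i hi1 hi2
    have := lam_anti hstrict hi1 hi2 (le_refl (n-1))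
    omega
  intro d
  induction d with
  | zero =>
      intro hd
      obtain ⟨π, hπ1, hπ2⟩ := exists_extension hn (fun i => σ (i, 1))
        (fun i h1 h2 => hσ.1 _ (hcell i 1 h1 h2 le_rfl (hlam1 i h1 h2)))
        (fun i i' h1 h2 h3 h4 heq => by
          by_contra hne
          exact hσ.2 _ (hcell i 1 h1 h2 le_rfl (hlam1 i h1 h2)) _
            (hcell i' 1 h3 h4 le_rfl (hlam1 i' h3 h4))
            ⟨fun hc => hne (congrArg Prod.fst hc), Or.inl rfl⟩ heq)
      refine ⟨π, ∅, hπ1, by simp, ?_⟩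
      intro j' i hj1 hj2 hi1 hi2
      have hj'1 : j' = 1 := by omega
      subst hj'1
      have hps : prodSel (GammaDown n lam 2) (∅ : Finset ℕ) = 1 := by
        rw [prodSel_eq_pselF]
        exact pselF_vanish (fun i _ => by simp)
      rw [hps, mul_one]
      exact hπ2 i hi1 (le_trans hi2 (conj_le n lam 1))
  | succ d ih =>
      intro hd
      obtain ⟨π, J, hπSn, hJb, hInv⟩ := ih (by omega)
      set j := 1 + d with hj
      rw [show 1 + (d + 1) = j + 1 from by omega]
      have hj1 : 1 ≤ j := by omega
      have hjlam : j + 1 ≤ lam 1 := by omega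
      set k := conj n lam (j+1) with hk
      set m' := conj n lam j + 1 with hm'
      have hk1 : 1 ≤ k := conj_pos hstrict hn (by omega)
      have hkn : k ≤ n - 1 := conj_le n lam (j+1)
      have hkm : k < m' := by
        have := conj_anti n lam (show j ≤ j+1 from by omega)
        omega
      have hm'n : m' ≤ n := by
        have := conj_le n lam j
        omega
      have hπcol : ∀ i, 1 ≤ i → i ≤ conj n lam j → π i = σ (i, j) := by
        intro i h1 h2
        have hI := hInv j i hj1 le_rfl h1 h2
        have hv : prodSel (GammaDown n lam (j+1)) J = 1 := by
          rw [prodSel_eq_pselF]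
          apply pselF_vanish
          intro idx hidx hmem
          have := (hJb idx hmem).1
          omega
        rwa [hv, mul_one] at hI
      set p : ℕ → ℕ := fun a => π⁻¹ (σ (a, j+1)) with hp
      have hπinv := isSn_inv hπSn
      have hcellk : ∀ a, 1 ≤ a → a ≤ k → (a, j+1) ∈ cells n lam := by
        intro a h1 h2
        have han : a ≤ n - 1 := le_trans h2 hkn
        apply hcell a (j+1) h1 han (by omega)
        exact (le_conj_iff hstrict h1 han).mp h2
      have Hrange : ∀ a, 1 ≤ a → a ≤ k → (1 ≤ p a ∧ p a ≤ n ∧ (p a ≤ a ∨ m' ≤ p a)) := by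
        intro a h1 h2
        have hσIcc := hσ.1 _ (hcellk a h1 h2)
        have hpIcc := (hπinv (σ (a, j+1))).1 hσIcc
        rw [Finset.mem_Icc] at hpIcc
        refine ⟨hpIcc.1, hpIcc.2, ?_⟩
        by_contra hc
        push_neg at hc
        obtain ⟨hc1, hc2⟩ := hc
        have hpa2 : p a ≤ conj n lam j := by omega
        have hπpa : π (p a) = σ (p a, j) := hπcol (p a) (by omega) hpa2
        have hππ : π (p a) = σ (a, j+1) := by
          simp only [hp]
          exact Equiv.apply_symm_apply π _
        have hpan : p a ≤ n - 1 := le_trans hpa2 (conj_le n lam j)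
        have hcellpa : (p a, j) ∈ cells n lam := by
          apply hcell _ j (by omega) hpan hj1
          exact (le_conj_iff hstrict (by omega) hpan).mp hpa2
        apply hσ.2 _ (hcellk a h1 h2) _ hcellpa
          ⟨fun hcq => by
              have h2q := congrArg Prod.snd hcq
              simp only at h2q
              omega,
            Or.inr (Or.inl ⟨rfl, by omega⟩)⟩
        rw [← hππ, hπpa]
      have Hinj : ∀ a b, 1 ≤ a → a ≤ k → 1 ≤ b → b ≤ k → p a = p b → a = b := by
        intro a b h1 h2 h3 h4 heq
        by_contra hne
        have hσeq : σ (a, j+1) = σ (b, j+1) := by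
          have h := congrArg π heq
          simpa only [hp, Equiv.Perm.inv_def, Equiv.apply_symm_apply] using h
        exact hσ.2 _ (hcellk a h1 h2) _ (hcellk b h3 h4)
          ⟨fun hc => hne (congrArg Prod.fst hc), Or.inl rfl⟩ hσeq
      -- the factor and the new selection
      have hFstruct := factor_structure (n := n) (lam := lam) hstrict hj1
      set F := GammaFactor n lam (j+1) with hF
      set A := GammaDown n lam (j+2) with hA
      set offs := A.length with hoffs
      have hsplit : GammaDown n lam (j+1) = A ++ F := by
        have := GammaDown_succ n lam (j := j+1) hjlam
        rw [this, show j + 1 + 1 = j + 2 from by omega]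
      set rp : ℕ × ℕ → Prop :=
        fun q => 1 ≤ q.1 ∧ q.1 ≤ k ∧ p q.1 ≠ q.1 ∧ q.2 = p (ce p q.1) with hrp
      set Jnew : Finset ℕ :=
        ((Finset.range F.length).filter (fun i => rp (F.getD i (0,0)))).image (· + offs)
        with hJnew
      set J' := Jnew ∪ J with hJ'
      set C := Cprod p k k with hC
      set π' := π * C⁻¹ with hπ'
      have hCsn : IsSnPerm n C := isSn_Cprod Hrange Hinj hkm le_rfl (by omega) k
      have hπ'Sn : IsSnPerm n π' := isSn_mul hπSn (isSn_inv hCsn)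
      have hlen1 : (GammaDown n lam (j+1)).length = offs + F.length := by
        rw [hsplit, List.length_append]
      obtain ⟨M2, hM2⟩ := GammaDown_prefix (n := n) (lam := lam) (j - 1) 2 (by omega) (by omega)
      rw [show 2 + (j - 1) = j + 1 from by omega] at hM2
      have hlen2 : (GammaDown n lam (j+1)).length ≤ (GammaDown n lam 2).length := by
        rw [hM2, List.length_append]
        omega
      have hJnewmem : ∀ x, x ∈ Jnew ↔ ∃ i, i < F.length ∧ rp (F.getD i (0,0)) ∧ x = i + offs := by
        intro x
        rw [hJnew, Finset.mem_image]
        constructor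
        · rintro ⟨i, hi, rfl⟩
          rw [Finset.mem_filter, Finset.mem_range] at hi
          exact ⟨i, hi.1, hi.2, rfl⟩
        · rintro ⟨i, h1, h2, rfl⟩
          exact ⟨i, Finset.mem_filter.mpr ⟨Finset.mem_range.mpr h1, h2⟩, rfl⟩
      have hJ'b : ∀ i ∈ J', (GammaDown n lam (j+1+1)).length ≤ i ∧
          i < (GammaDown n lam 2).length := by
        intro x hx
        rw [hJ', Finset.mem_union] at hx
        have hAlen : (GammaDown n lam (j+1+1)).length = offs := by
          rw [show j+1+1 = j+2 from by omega]
        rcases hx with hx | hx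
        · obtain ⟨i, hi1, _, rfl⟩ := (hJnewmem x).mp hx
          constructor
          · omega
          · have : i + offs < (GammaDown n lam (j+1)).length := by omega
            omega
        · have := hJb x hx
          constructor
          · omega
          · exact this.2
      -- the factor product
      have hCeq : pselF (fun i => rp (F.getD i (0,0))) F = C := by
        rw [pselF_getD F rp, hC]
        have hF2 : F = ((List.range k).reverse).flatMap fun a0 =>
            ((List.Ico m' (n + 1)).reverse).map fun b => (a0 + 1, b) := by
          rw [hk, hm']
          exact hFstruct
        rw [hF2]
        refine Eq.trans (congrArg (fun L : List (ℕ × ℕ) =>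
          (L.map (fun q : ℕ × ℕ => Equiv.swap q.1 q.2)).prod) ?_)
          (factor_prod Hrange Hinj hkm)
        apply List.filter_congr
        intro q _
        exact decide_eq_decide.mpr Iff.rfl
      refine ⟨π', J', hπ'Sn, hJ'b, ?_⟩
      intro j' i hj'1 hj'2 hi1 hi2
      rcases Nat.lt_or_ge j' (j+1) with hlt | hge
      · -- old columns j' ≤ j
        obtain ⟨M, hM⟩ := GammaDown_prefix (n := n) (lam := lam) ((j+1) - (j'+1)) (j'+1)
          (by omega) (by omega)
        rw [show j' + 1 + (j + 1 - (j' + 1)) = j + 1 from by omega] at hM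
        have hM' : GammaDown n lam (j'+1) = A ++ (F ++ M) := by
          rw [hM, hsplit, List.append_assoc]
        have hgoal : prodSel (GammaDown n lam (j'+1)) J'
            = C * prodSel (GammaDown n lam (j'+1)) J := by
          rw [prodSel_eq_pselF, prodSel_eq_pselF, hM']
          rw [pselF_append, pselF_append, pselF_append, pselF_append]
          have e1 : pselF (fun i => i ∈ J') A = 1 := by
            apply pselF_vanish
            intro idx hidx hmem
            have h0 := (hJ'b idx hmem).1
            rw [show j+1+1 = j+2 from by omega] at h0
            have hu : A.length = (GammaDown n lam (j+2)).length := rfl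
            omega
          have e2 : pselF (fun i => i ∈ J) A = 1 := by
            apply pselF_vanish
            intro idx hidx hmem
            have := (hJb idx hmem).1
            omega
          have e3 : pselF (fun i => (i + A.length) ∈ J) F = 1 := by
            apply pselF_vanish
            intro idx hidx hmem
            have := (hJb _ hmem).1
            omega
          have e4 : pselF (fun i => (i + A.length) ∈ J') F = C := by
            rw [← hCeq]
            apply pselF_congOn
            intro i hiF
            rw [hJ', Finset.mem_union]
            constructor
            · rintro (hx | hx)
              · obtain ⟨i', h1, h2, he⟩ := (hJnewmem _).mp hx
                have : i' = i := by omega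
                subst this
                exact h2
              · exfalso
                have := (hJb _ hx).1
                omega
            · intro hx
              left
              exact (hJnewmem _).mpr ⟨i, hiF, hx, rfl⟩
          have e5 : ∀ i, ((i + F.length) + A.length ∈ J') ↔ ((i + F.length) + A.length ∈ J) := by
            intro i
            rw [hJ', Finset.mem_union]
            constructor
            · rintro (hx | hx)
              · obtain ⟨i', h1, _, he⟩ := (hJnewmem _).mp hx
                omega
              · exact hx
            · intro hx
              right
              exact hx
          have e6 : pselF (fun i => (i + F.length) + A.length ∈ J') M
              = pselF (fun i => (i + F.length) + A.length ∈ J) M := by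
            apply pselF_congOn
            intro i _
            exact e5 i
          rw [e1, e2, e3, e4, e6, one_mul, one_mul, one_mul]
        rw [hgoal, hπ']
        rw [show π * C⁻¹ * (C * prodSel (GammaDown n lam (j'+1)) J)
            = π * prodSel (GammaDown n lam (j'+1)) J from by group]
        exact hInv j' i hj'1 (by omega) hi1 hi2
      · -- new column j+1
        have hj'eq : j' = j + 1 := by omega
        subst hj'eq
        have hik : i ≤ k := hi2
        have hps : prodSel (GammaDown n lam (j+1+1)) J' = 1 := by
          rw [prodSel_eq_pselF]
          apply pselF_vanish
          intro idx hidx hmem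
          have := (hJ'b idx hmem).1
          omega
        rw [hps, mul_one, hπ']
        have hCpi : C (p i) = i := Cprod_main Hrange Hinj hkm hi1 hik
        have hCinv : C⁻¹ i = p i := by
          conv_lhs => rw [← hCpi]
          exact Equiv.symm_apply_apply _ _
        rw [Equiv.Perm.mul_apply, hCinv]
        simp only [hp]
        exact Equiv.apply_symm_apply π _


theorem filling_map_surjective (n : ℕ) (lam : ℕ → ℕ) (hn : 2 ≤ n)
    (hstrict : ∀ i, 1 ≤ i → i < n - 1 → lam (i + 1) < lam i)
    (hpos : 0 < lam (n - 1))
    (σ : ℕ × ℕ → ℕ) (hσ : IsNonAttacking n lam σ) :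
    ∃ (w : Equiv.Perm ℕ) (J : Finset ℕ), IsSnPerm n w ∧
      J ⊆ Finset.range (GammaChain n lam).length ∧
      ∀ c ∈ cells n lam, fillingMap n lam w J c = σ c := by
  classical
  have h1n : (1 : ℕ) ≤ n - 1 := by omega
  have hlam1pos : 1 ≤ lam 1 := by
    have := lam_anti hstrict (le_refl 1) h1n (le_refl (n-1))
    omega
  obtain ⟨π, J, hSn, hJb, hInv⟩ := P_aux n lam hn hstrict hpos σ hσ (lam 1 - 1) (by omega)
  refine ⟨π, J, hSn, ?_, ?_⟩
  · intro x hx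
    exact Finset.mem_range.mpr (hJb x hx).2
  · intro c hc
    obtain ⟨i, j'⟩ := c
    have hcℓ := mem_cells.mp hc
    obtain ⟨hi1, hi2, hj1, hj2⟩ := hcℓ
    have hjlam1 : j' ≤ lam 1 := by
      have := lam_anti hstrict (le_refl 1) hi1 hi2
      omega
    show (π * prodSel (GammaDown n lam (j' + 1)) J) i = σ (i, j')
    exact hInv j' i hj1 (by omega) hi1 ((le_conj_iff hstrict hi1 hi2).mpr hj2)


end Stmt7
end

section
/- In type A_{n−1}, for any folding pair (w,T) with filling σ = f(w,T), the content of σ equals w(μ(T)) as an element of the weight lattice ℤⁿ/ℤ(1,...,1); i.e. the multiset of entries of σ records the weight of the corresponding alcove walk. -/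
/-!
Statement 8: In type A_{n-1}, for any folding pair (w,T) with filling σ = f(w,T), the
content of σ equals w(μ(T)) as an element of the weight lattice ℤⁿ/ℤ(1,…,1), where
μ(T) = r̂_{j₁} ⋯ r̂_{j_s}(λ) and r̂_i = s_{β_i, l_i} with l_i = #{j ≤ i : β_j = β_i}.
-/

namespace Stmt8



def cells (n : ℕ) (lam : ℕ → ℕ) : Finset (ℕ × ℕ) :=
  (Finset.Icc 1 (n - 1)).biUnion fun i => {i} ×ˢ Finset.Icc 1 (lam i)

def conj (n : ℕ) (lam : ℕ → ℕ) (j : ℕ) : ℕ :=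
  ((Finset.Icc 1 (n - 1)).filter fun i => j ≤ lam i).card

/-- the row ((a,n),(a,n-1),…,(a,k+1)) of the segment Γ(k) -/
def rowG (n a k : ℕ) : List (ℕ × ℕ) :=
  ((List.Ico (k + 1) (n + 1)).reverse).map fun b => (a, b)

/-- the same row with the last root (a,k+1) removed -/
def rowG' (n a k : ℕ) : List (ℕ × ℕ) :=
  ((List.Ico (k + 2) (n + 1)).reverse).map fun b => (a, b)

/-- the segment Γ(k): rows a = k, k-1, …, 1 -/
def GammaSeg (n k : ℕ) : List (ℕ × ℕ) :=
  ((List.range k).reverse).flatMap fun a0 => rowG n (a0 + 1) k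

/-- the segment Γ'(k) -/
def GammaSeg' (n k : ℕ) : List (ℕ × ℕ) :=
  ((List.range k).reverse).flatMap fun a0 => rowG' n (a0 + 1) k

open Classical in
/-- the factor Γ_j of the λ-chain: Γ'(λ'_j) if j is minimal with its conjugate value,
Γ(λ'_j) otherwise -/
noncomputable def GammaFactor (n : ℕ) (lam : ℕ → ℕ) (j : ℕ) : List (ℕ × ℕ) :=
  if (∀ i, 1 ≤ i → conj n lam i = conj n lam j → j ≤ i) then
    GammaSeg' n (conj n lam j) else GammaSeg n (conj n lam j)

/-- the concatenation Γ_{λ₁} Γ_{λ₁ - 1} ⋯ Γ_j -/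
noncomputable def GammaDown (n : ℕ) (lam : ℕ → ℕ) (j : ℕ) : List (ℕ × ℕ) :=
  ((List.range (lam 1 + 1 - j)).reverse).flatMap fun j0 => GammaFactor n lam (j0 + j)

/-- the fixed λ-chain Γ = Γ_{λ₁} ⋯ Γ₂ -/
noncomputable def GammaChain (n : ℕ) (lam : ℕ → ℕ) : List (ℕ × ℕ) :=
  GammaDown n lam 2

/-- the product of the transpositions at the selected (global) positions of a prefix of Γ,
taken in order -/
noncomputable def prodSel (L : List (ℕ × ℕ)) (J : Finset ℕ) : Equiv.Perm ℕ :=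
  (((L.zipIdx.map Prod.swap).filter fun q => q.1 ∈ J).map fun q => Equiv.swap q.2.1 q.2.2).prod

/-- π_j = w T_{λ₁} ⋯ T_{j+1} -/
noncomputable def piPerm (n : ℕ) (lam : ℕ → ℕ) (w : Equiv.Perm ℕ) (J : Finset ℕ)
    (j : ℕ) : Equiv.Perm ℕ :=
  w * prodSel (GammaDown n lam (j + 1)) J

/-- the filling map: f(w,T)(i,j) = π_j(i) -/
noncomputable def fillingMap (n : ℕ) (lam : ℕ → ℕ) (w : Equiv.Perm ℕ) (J : Finset ℕ) :
    ℕ × ℕ → ℕ :=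
  fun c => piPerm n lam w J c.2 c.1

/-- w is a permutation of {1,…,n} (an element of S_n) -/
def IsSnPerm (n : ℕ) (w : Equiv.Perm ℕ) : Prop :=
  ∀ i : ℕ, (i ∈ Finset.Icc 1 n → w i ∈ Finset.Icc 1 n) ∧ (i ∉ Finset.Icc 1 n → w i = i)

/-- the affine reflection r̂ attached to position idx of the λ-chain Γ, acting on the
weight space ℤⁿ (vectors as functions ℕ → ℤ, coordinates 1,…,n):
s_{(a,b),l}(v) = v - (v_a - v_b - l)(e_a - e_b), where (a,b) = β_idx and
l = #{j ≤ idx : β_j = β_idx}. -/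
noncomputable def rhat (n : ℕ) (lam : ℕ → ℕ) (idx : ℕ) (v : ℕ → ℤ) : ℕ → ℤ :=
  let p := (GammaChain n lam).getD idx (0, 0)
  let l : ℤ := ((GammaChain n lam).take (idx + 1)).count p
  fun t => v t - (v p.1 - v p.2 - l) *
    ((if t = p.1 then 1 else 0) - (if t = p.2 then 1 else 0))

/-- λ as a weight vector (λ₁,…,λ_{n-1},0) -/
def lamVec (n : ℕ) (lam : ℕ → ℕ) : ℕ → ℤ :=
  fun i => if 1 ≤ i ∧ i ≤ n - 1 then (lam i : ℤ) else 0

/-- μ(T) = r̂_{j₁} ⋯ r̂_{j_s}(λ), for J = {j₁ < … < j_s} -/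
noncomputable def muWeight (n : ℕ) (lam : ℕ → ℕ) (J : Finset ℕ) : ℕ → ℤ :=
  (J.sort (· ≤ ·)).foldr (fun idx v => rhat n lam idx v) (lamVec n lam)

/-- content(σ)_v = number of entries of σ equal to v -/
noncomputable def content (n : ℕ) (lam : ℕ → ℕ) (σ : ℕ × ℕ → ℕ) : ℕ → ℤ :=
  fun v => (((cells n lam).filter fun c => σ c = v).card : ℤ)

/-- generalized version of prodSel starting the enumeration at `s` -/
noncomputable def pSel (s : ℕ) (M : List (ℕ × ℕ)) (J : Finset ℕ) : Equiv.Perm ℕ :=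
  ((((M.zipIdx s).map Prod.swap).filter fun q => q.1 ∈ J).map fun q => Equiv.swap q.2.1 q.2.2).prod

lemma prodSel_eq_pSel (L : List (ℕ × ℕ)) (J : Finset ℕ) :
    prodSel L J = pSel 0 L J := by
  rfl

lemma pSel_nil (s : ℕ) (J : Finset ℕ) : pSel s [] J = 1 := by
  simp [pSel]

lemma pSel_cons (s : ℕ) (x : ℕ × ℕ) (M : List (ℕ × ℕ)) (J : Finset ℕ) :
    pSel s (x :: M) J
      = (if s ∈ J then Equiv.swap x.1 x.2 else 1) * pSel (s + 1) M J := by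
  by_cases h : s ∈ J <;> simp [pSel, List.zipIdx_cons, List.filter_cons, h]

lemma pSel_congr (M : List (ℕ × ℕ)) : ∀ (s : ℕ) (J J' : Finset ℕ),
    (∀ t, s ≤ t → (t ∈ J ↔ t ∈ J')) → pSel s M J = pSel s M J' := by
  induction M with
  | nil => intro s J J' _; simp [pSel_nil]
  | cons x M ih =>
      intro s J J' h
      rw [pSel_cons, pSel_cons, ih (s + 1) J J' (fun t ht => h t (by omega))]
      by_cases hs : s ∈ J
      · rw [if_pos hs, if_pos ((h s le_rfl).1 hs)]
      · rw [if_neg hs, if_neg (fun hs' => hs ((h s le_rfl).2 hs'))]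

lemma pSel_eq_one (M : List (ℕ × ℕ)) : ∀ (s : ℕ) (J : Finset ℕ),
    (∀ t ∈ J, t < s ∨ s + M.length ≤ t) → pSel s M J = 1 := by
  induction M with
  | nil => intro s J _; simp [pSel_nil]
  | cons x M ih =>
      intro s J h
      rw [pSel_cons]
      have hs : s ∉ J := by
        intro hs
        rcases h s hs with h' | h'
        · exact absurd h' (lt_irrefl s)
        · simp [List.length_cons] at h'
      rw [if_neg hs, one_mul]
      refine ih (s + 1) J (fun t ht => ?_)
      rcases h t ht with h' | h'
      · left; omega
      · right; simp [List.length_cons] at h'; omega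

lemma pSel_erase_min (M : List (ℕ × ℕ)) : ∀ (s : ℕ) (J : Finset ℕ) (p : ℕ),
    p ∈ J → (∀ t ∈ J, s ≤ t → p ≤ t) → s ≤ p → p < s + M.length →
    pSel s M J
      = Equiv.swap (M.getD (p - s) (0, 0)).1 (M.getD (p - s) (0, 0)).2
        * pSel s M (J.erase p) := by
  induction M with
  | nil => intro s J p _ _ _ h2; simp at h2; omega
  | cons x M ih =>
      intro s J p hp hmin h1 h2
      by_cases hsp : s = p
      · subst hsp
        rw [pSel_cons, pSel_cons, if_pos hp, if_neg (by simp), one_mul]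
        have : pSel (s + 1) M J = pSel (s + 1) M (J.erase s) := by
          refine pSel_congr M (s + 1) J (J.erase s) (fun t ht => ?_)
          simp only [Finset.mem_erase]
          constructor
          · intro h; exact ⟨by omega, h⟩
          · exact fun h => h.2
        rw [this, Nat.sub_self]
        simp
      · have hslt : s < p := lt_of_le_of_ne h1 hsp
        have hsJ : s ∉ J := fun hs => by have := hmin s hs le_rfl; omega
        have hsJ' : s ∉ J.erase p := fun hs => hsJ (Finset.mem_of_mem_erase hs)
        rw [pSel_cons, pSel_cons, if_neg hsJ, if_neg hsJ', one_mul, one_mul]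
        have hps : p - s = (p - (s + 1)) + 1 := by omega
        rw [hps]
        simp only [List.getD_cons_succ]
        refine ih (s + 1) J p hp (fun t ht _ => hmin t ht (by omega)) (by omega) ?_
        simp at h2 ⊢; omega

lemma prodSel_empty (L : List (ℕ × ℕ)) : prodSel L ∅ = 1 := by
  rw [prodSel_eq_pSel]
  exact pSel_eq_one L 0 ∅ (by simp)

lemma prodSel_eq_one (L : List (ℕ × ℕ)) (J : Finset ℕ)
    (h : ∀ t ∈ J, L.length ≤ t) : prodSel L J = 1 := by
  rw [prodSel_eq_pSel]
  exact pSel_eq_one L 0 J (fun t ht => Or.inr (by simpa using h t ht))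

lemma prodSel_min_erase (L : List (ℕ × ℕ)) (J : Finset ℕ) (p : ℕ)
    (hp : p ∈ J) (hmin : ∀ t ∈ J, p ≤ t) (hlen : p < L.length) :
    prodSel L J
      = Equiv.swap (L.getD p (0, 0)).1 (L.getD p (0, 0)).2 * prodSel L (J.erase p) := by
  rw [prodSel_eq_pSel, prodSel_eq_pSel]
  have := pSel_erase_min L 0 J p hp (fun t ht _ => hmin t ht) (Nat.zero_le _) (by omega)
  simpa using this


section LamConj

variable {n : ℕ} {lam : ℕ → ℕ}

lemma lam_anti (hstrict : ∀ i, 1 ≤ i → i < n - 1 → lam (i + 1) < lam i)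
    {a b : ℕ} (ha : 1 ≤ a) (hab : a ≤ b) (hb : b ≤ n - 1) : lam b ≤ lam a := by
  induction b with
  | zero => omega
  | succ b ih =>
      rcases Nat.lt_or_ge a (b + 1) with h | h
      · have hb' : b < n - 1 := by omega
        have h1 : lam (b + 1) < lam b := hstrict b (by omega) hb'
        have h2 : lam b ≤ lam a := ih (by omega) (by omega)
        omega
      · have : a = b + 1 := by omega
        subst this; rfl

lemma conj_le (j : ℕ) : conj n lam j ≤ n - 1 := by
  have := Finset.card_le_card (Finset.filter_subset (fun i => j ≤ lam i) (Finset.Icc 1 (n - 1)))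
  simpa [Nat.card_Icc, conj] using this

lemma conj_anti {j j' : ℕ} (h : j ≤ j') : conj n lam j' ≤ conj n lam j := by
  apply Finset.card_le_card
  intro x hx
  simp only [Finset.mem_filter] at hx ⊢
  exact ⟨hx.1, le_trans h hx.2⟩

lemma conj_dual (hstrict : ∀ i, 1 ≤ i → i < n - 1 → lam (i + 1) < lam i)
    {j a : ℕ} (ha1 : 1 ≤ a) (ha2 : a ≤ n - 1) :
    a ≤ conj n lam j ↔ j ≤ lam a := by
  constructor
  · intro h
    by_contra hc
    push_neg at hc
    have hsub : (Finset.Icc 1 (n - 1)).filter (fun i => j ≤ lam i) ⊆ Finset.Icc 1 (a - 1) := by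
      intro x hx
      simp only [Finset.mem_filter, Finset.mem_Icc] at hx ⊢
      refine ⟨hx.1.1, ?_⟩
      by_contra hxa
      push_neg at hxa
      have : lam x ≤ lam a := lam_anti hstrict ha1 (by omega) hx.1.2
      omega
    have := Finset.card_le_card hsub
    simp only [Nat.card_Icc] at this
    unfold conj at h
    omega
  · intro h
    have hsub : Finset.Icc 1 a ⊆ (Finset.Icc 1 (n - 1)).filter (fun i => j ≤ lam i) := by
      intro x hx
      simp only [Finset.mem_filter, Finset.mem_Icc] at hx ⊢
      have : lam a ≤ lam x := lam_anti hstrict hx.1 hx.2 ha2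
      exact ⟨⟨hx.1, by omega⟩, by omega⟩
    have := Finset.card_le_card hsub
    simpa [Nat.card_Icc, conj] using this

lemma lam_le_lam1 (hstrict : ∀ i, 1 ≤ i → i < n - 1 → lam (i + 1) < lam i)
    {a : ℕ} (ha1 : 1 ≤ a) (ha2 : a ≤ n - 1) : lam a ≤ lam 1 :=
  lam_anti hstrict le_rfl ha1 ha2

lemma conj_pos (hstrict : ∀ i, 1 ≤ i → i < n - 1 → lam (i + 1) < lam i)
    (hn : 2 ≤ n) {j : ℕ} (hj : j ≤ lam 1) : 1 ≤ conj n lam j := by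
  have := (conj_dual (n := n) hstrict (j := j) le_rfl (by omega)).2 hj
  omega

end LamConj


lemma GammaFactor_primed {n : ℕ} {lam : ℕ → ℕ} {j : ℕ}
    (h : ∀ i, 1 ≤ i → conj n lam i = conj n lam j → j ≤ i) :
    GammaFactor n lam j = GammaSeg' n (conj n lam j) := by
  rw [GammaFactor, if_pos h]

lemma GammaFactor_not_primed {n : ℕ} {lam : ℕ → ℕ} {j : ℕ}
    (h : ¬ ∀ i, 1 ≤ i → conj n lam i = conj n lam j → j ≤ i) :
    GammaFactor n lam j = GammaSeg n (conj n lam j) := by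
  rw [GammaFactor, if_neg h]

lemma count_eq_ite {α : Type*} [BEq α] [LawfulBEq α] {l : List α} (h : l.Nodup) (a : α) :
    l.count a = if a ∈ l then 1 else 0 := by
  induction l with
  | nil => simp
  | cons b l ih =>
    rw [List.nodup_cons] at h
    by_cases hab : a = b
    · subst hab; simp [List.count_cons, ih h.2, h.1]
    · simp [List.count_cons, ih h.2, hab, Ne.symm hab]

lemma mem_rowG {n a k : ℕ} {x : ℕ × ℕ} :
    x ∈ rowG n a k ↔ x.1 = a ∧ k < x.2 ∧ x.2 ≤ n := by
  simp only [rowG, List.mem_map, List.mem_reverse, List.Ico.mem]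
  constructor
  · rintro ⟨b, hb, rfl⟩; exact ⟨rfl, by omega, by omega⟩
  · rintro ⟨h1, h2, h3⟩
    exact ⟨x.2, ⟨by omega, by omega⟩, by rw [← h1]⟩

lemma mem_rowG' {n a k : ℕ} {x : ℕ × ℕ} :
    x ∈ rowG' n a k ↔ x.1 = a ∧ k + 1 < x.2 ∧ x.2 ≤ n := by
  simp only [rowG', List.mem_map, List.mem_reverse, List.Ico.mem]
  constructor
  · rintro ⟨b, hb, rfl⟩; exact ⟨rfl, by omega, by omega⟩
  · rintro ⟨h1, h2, h3⟩
    exact ⟨x.2, ⟨by omega, by omega⟩, by rw [← h1]⟩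

lemma mem_GammaSeg {n k : ℕ} {x : ℕ × ℕ} :
    x ∈ GammaSeg n k ↔ 1 ≤ x.1 ∧ x.1 ≤ k ∧ k < x.2 ∧ x.2 ≤ n := by
  simp only [GammaSeg, List.mem_flatMap, List.mem_reverse, List.mem_range]
  constructor
  · rintro ⟨a0, ha0, hx⟩
    rw [mem_rowG] at hx
    omega
  · rintro ⟨h1, h2, h3, h4⟩
    exact ⟨x.1 - 1, by omega, mem_rowG.2 ⟨by omega, h3, h4⟩⟩

lemma mem_GammaSeg' {n k : ℕ} {x : ℕ × ℕ} :
    x ∈ GammaSeg' n k ↔ 1 ≤ x.1 ∧ x.1 ≤ k ∧ k + 1 < x.2 ∧ x.2 ≤ n := by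
  simp only [GammaSeg', List.mem_flatMap, List.mem_reverse, List.mem_range]
  constructor
  · rintro ⟨a0, ha0, hx⟩
    rw [mem_rowG'] at hx
    omega
  · rintro ⟨h1, h2, h3, h4⟩
    exact ⟨x.1 - 1, by omega, mem_rowG'.2 ⟨by omega, h3, h4⟩⟩

lemma nodup_rowG {n a k : ℕ} : (rowG n a k).Nodup :=
  List.Nodup.map (fun b b' h => by simpa using h)
    (List.nodup_reverse.2 (List.Ico.nodup _ _))

lemma nodup_rowG' {n a k : ℕ} : (rowG' n a k).Nodup :=
  List.Nodup.map (fun b b' h => by simpa using h)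
    (List.nodup_reverse.2 (List.Ico.nodup _ _))

lemma nodup_GammaSeg {n k : ℕ} : (GammaSeg n k).Nodup := by
  rw [GammaSeg, List.nodup_flatMap]
  refine ⟨fun _ _ => nodup_rowG, ?_⟩
  refine List.Pairwise.imp ?_ (List.nodup_reverse.2 List.nodup_range)
  intro a b hab x hx hx'
  rw [mem_rowG] at hx hx'
  omega

lemma nodup_GammaSeg' {n k : ℕ} : (GammaSeg' n k).Nodup := by
  rw [GammaSeg', List.nodup_flatMap]
  refine ⟨fun _ _ => nodup_rowG', ?_⟩
  refine List.Pairwise.imp ?_ (List.nodup_reverse.2 List.nodup_range)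
  intro a b hab x hx hx'
  rw [mem_rowG'] at hx hx'
  omega

lemma nodup_GammaFactor {n : ℕ} {lam : ℕ → ℕ} {j : ℕ} : (GammaFactor n lam j).Nodup := by
  by_cases h : ∀ i, 1 ≤ i → conj n lam i = conj n lam j → j ≤ i
  · rw [GammaFactor_primed h]; exact nodup_GammaSeg'
  · rw [GammaFactor_not_primed h]; exact nodup_GammaSeg

lemma mem_GammaFactor_imp {n : ℕ} {lam : ℕ → ℕ} {j : ℕ} {x : ℕ × ℕ}
    (h : x ∈ GammaFactor n lam j) :
    1 ≤ x.1 ∧ x.1 ≤ conj n lam j ∧ conj n lam j < x.2 ∧ x.2 ≤ n := by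
  by_cases hp : ∀ i, 1 ≤ i → conj n lam i = conj n lam j → j ≤ i
  · rw [GammaFactor_primed hp, mem_GammaSeg'] at h
    omega
  · rw [GammaFactor_not_primed hp, mem_GammaSeg] at h
    omega

/-- the key counting fact for a factor strictly left of the factor containing the root -/
lemma count_GammaFactor {n : ℕ} {lam : ℕ → ℕ} {j j' : ℕ} {x : ℕ × ℕ}
    (hj : j' < j) (hj' : 1 ≤ j')
    (hx1 : 1 ≤ x.1) (hxn : x.2 ≤ n)
    (hup : conj n lam j' < x.2)
    (hconj : conj n lam j ≤ conj n lam j') :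
    (GammaFactor n lam j).count x
      = if x.1 ≤ conj n lam j ∧ conj n lam j < x.2 then 1 else 0 := by
  by_cases hc : x.1 ≤ conj n lam j ∧ conj n lam j < x.2
  · rw [if_pos hc]
    by_cases hp : ∀ i, 1 ≤ i → conj n lam i = conj n lam j → j ≤ i
    · -- primed: must check x.2 ≠ conj j + 1
      have hne : conj n lam j + 1 < x.2 := by
        rcases Nat.lt_or_ge (conj n lam j + 1) x.2 with h | h
        · exact h
        · -- x.2 = conj j + 1, so conj j' ≤ conj j, hence equal; primality gives j ≤ j'
          have hx2 : x.2 = conj n lam j + 1 := by omega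
          have : conj n lam j' = conj n lam j := by omega
          have := hp j' hj' this
          omega
      rw [GammaFactor_primed hp, count_eq_ite nodup_GammaSeg' _,
        if_pos (mem_GammaSeg'.2 ⟨hx1, hc.1, hne, hxn⟩)]
    · rw [GammaFactor_not_primed hp, count_eq_ite nodup_GammaSeg _,
        if_pos (mem_GammaSeg.2 ⟨hx1, hc.1, hc.2, hxn⟩)]
  · rw [if_neg hc]
    rw [List.count_eq_zero]
    intro hmem
    have := mem_GammaFactor_imp hmem
    omega

lemma count_GammaFactor_self {n : ℕ} {lam : ℕ → ℕ} {j : ℕ} {x : ℕ × ℕ}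
    (h : x ∈ GammaFactor n lam j) : (GammaFactor n lam j).count x = 1 := by
  rw [count_eq_ite nodup_GammaFactor, if_pos h]


section GD

variable {n : ℕ} {lam : ℕ → ℕ}

lemma gammaDown_eq_nil {j : ℕ} (h : lam 1 < j) : GammaDown n lam j = [] := by
  unfold GammaDown
  rw [show lam 1 + 1 - j = 0 by omega]
  simp

lemma gammaDown_succ {j : ℕ} (h : j ≤ lam 1) :
    GammaDown n lam j = GammaDown n lam (j + 1) ++ GammaFactor n lam j := by
  unfold GammaDown
  rw [show lam 1 + 1 - j = (lam 1 - j) + 1 by omega,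
     show lam 1 + 1 - (j + 1) = lam 1 - j by omega]
  rw [List.range_succ_eq_map, List.reverse_cons, List.flatMap_append,
    ← List.map_reverse, List.flatMap_map]
  have hf : (fun a => GammaFactor n lam (Nat.succ a + j))
      = fun j0 => GammaFactor n lam (j0 + (j + 1)) := by
    funext j0; congr 1; omega
  rw [hf]
  simp

lemma gammaDown_prefix_succ (j : ℕ) :
    GammaDown n lam (j + 1) <+: GammaDown n lam j := by
  rcases le_or_gt j (lam 1) with h | h
  · rw [gammaDown_succ h]; exact List.prefix_append _ _
  · rw [gammaDown_eq_nil (by omega : lam 1 < j + 1)]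
    exact List.nil_prefix

lemma gammaDown_prefix {j j' : ℕ} (h : j ≤ j') :
    GammaDown n lam j' <+: GammaDown n lam j := by
  induction j' , h using Nat.le_induction with
  | base => exact List.prefix_refl _
  | succ j' hj ih => exact (gammaDown_prefix_succ j').trans ih

lemma count_gammaDown (x : ℕ × ℕ) : ∀ (d j : ℕ), lam 1 + 1 - j = d →
    (GammaDown n lam j).count x
      = ∑ j' ∈ Finset.Icc j (lam 1), (GammaFactor n lam j').count x := by
  intro d
  induction d with
  | zero =>
      intro j hj
      rw [gammaDown_eq_nil (by omega), Finset.Icc_eq_empty (by omega)]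
      simp
  | succ d ih =>
      intro j hj
      have hjle : j ≤ lam 1 := by omega
      rw [gammaDown_succ hjle, List.count_append, ih (j + 1) (by omega)]
      rw [show Finset.Icc j (lam 1) = insert j (Finset.Icc (j + 1) (lam 1)) by
        ext t; simp [Finset.mem_Icc]; omega]
      rw [Finset.sum_insert (by simp [Finset.mem_Icc])]
      ring

lemma length_gammaDown_succ {j : ℕ} (h : j ≤ lam 1) :
    (GammaDown n lam j).length
      = (GammaDown n lam (j + 1)).length + (GammaFactor n lam j).length := by
  rw [gammaDown_succ h, List.length_append]

lemma gammaDown_top : GammaDown n lam (lam 1 + 1) = [] := by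
  unfold GammaDown
  simp

end GD



section Star

variable {n : ℕ} {lam : ℕ → ℕ}

lemma gammaChain_eq : GammaChain n lam = GammaDown n lam 2 := rfl

lemma lam1_ge_two (h : GammaChain n lam ≠ []) : 2 ≤ lam 1 := by
  by_contra hc
  push_neg at hc
  exact h (gammaDown_eq_nil (by omega))

set_option maxHeartbeats 1000000 in
lemma star (p : ℕ) (hp : p < (GammaChain n lam).length) :
    1 ≤ ((GammaChain n lam).getD p (0, 0)).1 ∧
    ((GammaChain n lam).getD p (0, 0)).1 < ((GammaChain n lam).getD p (0, 0)).2 ∧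
    ((GammaChain n lam).getD p (0, 0)).2 ≤ n ∧
    ((GammaChain n lam).take (p + 1)).count ((GammaChain n lam).getD p (0, 0))
      = ((Finset.Icc 1 (lam 1)).filter (fun j =>
          (GammaDown n lam (j + 1)).length ≤ p ∧
          ((GammaChain n lam).getD p (0, 0)).1 ≤ conj n lam j ∧
          conj n lam j < ((GammaChain n lam).getD p (0, 0)).2)).card := by
  set β := (GammaChain n lam).getD p (0, 0) with hβdef
  have hne : GammaChain n lam ≠ [] := by
    intro h; rw [h] at hp; simp at hp
  have hL2 : 2 ≤ lam 1 := lam1_ge_two hne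
  set S : Finset ℕ := (Finset.Icc 2 (lam 1)).filter
      (fun j => (GammaDown n lam (j + 1)).length ≤ p) with hS
  have hSne : S.Nonempty := by
    refine ⟨lam 1, ?_⟩
    simp only [hS, Finset.mem_filter, Finset.mem_Icc]
    exact ⟨⟨hL2, le_rfl⟩, by rw [gammaDown_top]; simp⟩
  set js := S.min' hSne with hjs
  have hjsS := S.min'_mem hSne
  obtain ⟨hjsIcc, hms⟩ := Finset.mem_filter.1 hjsS
  obtain ⟨hjs1, hjs2⟩ := Finset.mem_Icc.1 hjsIcc
  have hlow : p < (GammaDown n lam js).length := by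
    rcases eq_or_lt_of_le hjs1 with h2 | h2
    · rw [hjs, ← h2, ← gammaChain_eq]; exact hp
    · by_contra hc
      push_neg at hc
      have hmem : js - 1 ∈ S := by
        simp only [hS, Finset.mem_filter, Finset.mem_Icc]
        exact ⟨⟨by omega, by omega⟩, by rw [show js - 1 + 1 = js by omega]; exact hc⟩
      have := Finset.min'_le S _ hmem
      omega
  have hsplit : GammaDown n lam js = GammaDown n lam (js + 1) ++ GammaFactor n lam js :=
    gammaDown_succ hjs2
  obtain ⟨R, hR⟩ : GammaDown n lam js <+: GammaChain n lam := by
    rw [gammaChain_eq]; exact gammaDown_prefix hjs1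
  set P := GammaDown n lam (js + 1) with hP
  set F := GammaFactor n lam js with hF
  have hlen_js : (GammaDown n lam js).length = P.length + F.length := by
    rw [hsplit, List.length_append]
  have hpbound : p < P.length + F.length := by omega
  have htake : (GammaChain n lam).take (p + 1) = P ++ F.take (p + 1 - P.length) := by
    rw [← hR, hsplit, List.append_assoc, List.take_append,
      List.take_of_length_le (by omega : P.length ≤ p + 1)]
    congr 1
    rw [List.take_append,
      show p + 1 - P.length - F.length = 0 by omega]
    simp
  have hβ : β = F.getD (p - P.length) (0, 0) := by
    have h1 : p < ((GammaChain n lam).take (p + 1)).length := by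
      rw [List.length_take]; omega
    have h2 : p < (P ++ F.take (p + 1 - P.length)).length := by
      rw [← htake]; exact h1
    have h3 : p - P.length < (F.take (p + 1 - P.length)).length := by
      rw [List.length_take]; omega
    have e1 : (GammaChain n lam)[p]'hp = ((GammaChain n lam).take (p + 1))[p]'h1 :=
      List.getElem_take.symm
    have e2 : ((GammaChain n lam).take (p + 1))[p]'h1
        = (P ++ F.take (p + 1 - P.length))[p]'h2 := by
      simp only [htake]
    have e3 : (P ++ F.take (p + 1 - P.length))[p]'h2
        = (F.take (p + 1 - P.length))[p - P.length]'h3 :=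
      List.getElem_append_right (by omega : P.length ≤ p)
    have e4 : (F.take (p + 1 - P.length))[p - P.length]'h3
        = F[p - P.length]'(by omega) := List.getElem_take
    rw [hβdef, List.getD_eq_getElem _ _ hp,
      List.getD_eq_getElem _ _ (show p - P.length < F.length by omega)]
    rw [e1, e2, e3, e4]
  have hβF : β ∈ F := by
    rw [hβ, List.getD_eq_getElem _ _ (show p - P.length < F.length by omega)]
    exact List.getElem_mem _
  obtain ⟨hb1, hb2, hb3, hb4⟩ := mem_GammaFactor_imp (hF ▸ hβF)
  refine ⟨hb1, by omega, hb4, ?_⟩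
  -- now the count identity
  have hcount_take : (F.take (p + 1 - P.length)).count β = 1 := by
    rw [count_eq_ite (List.Nodup.sublist (List.take_sublist _ _) (hF ▸ nodup_GammaFactor)) β]
    rw [if_pos]
    have h1 : p - P.length < (F.take (p + 1 - P.length)).length := by
      rw [List.length_take]; omega
    have : (F.take (p + 1 - P.length))[p - P.length] = F[p - P.length]'(by omega) :=
      List.getElem_take
    rw [hβ, List.getD_eq_getElem _ _ (show p - P.length < F.length by omega), ← this]
    exact List.getElem_mem _
  have hcountP : P.count β = ∑ j ∈ Finset.Icc (js + 1) (lam 1), (GammaFactor n lam j).count β :=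
    count_gammaDown β (lam 1 + 1 - (js + 1)) (js + 1) rfl
  have hterm : ∀ j ∈ Finset.Icc (js + 1) (lam 1),
      (GammaFactor n lam j).count β
        = if β.1 ≤ conj n lam j ∧ conj n lam j < β.2 then 1 else 0 := by
    intro j hj
    rw [Finset.mem_Icc] at hj
    exact count_GammaFactor (by omega) (by omega) hb1 hb4 hb3
      (conj_anti (by omega))
  -- rewrite the target filter
  have hfilter : (Finset.Icc 1 (lam 1)).filter (fun j =>
        (GammaDown n lam (j + 1)).length ≤ p ∧
        β.1 ≤ conj n lam j ∧ conj n lam j < β.2)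
      = (Finset.Icc js (lam 1)).filter (fun j =>
        β.1 ≤ conj n lam j ∧ conj n lam j < β.2) := by
    ext j
    simp only [Finset.mem_filter, Finset.mem_Icc]
    constructor
    · rintro ⟨⟨hj1, hj2⟩, hlen, hind⟩
      refine ⟨⟨?_, hj2⟩, hind⟩
      by_contra hc
      push_neg at hc
      have hpre : GammaDown n lam js <+: GammaDown n lam (j + 1) :=
        gammaDown_prefix (by omega)
      have := hpre.length_le
      omega
    · rintro ⟨⟨hj1, hj2⟩, hind⟩
      refine ⟨⟨by omega, hj2⟩, ?_, hind⟩
      have hpre : GammaDown n lam (j + 1) <+: GammaDown n lam (js + 1) :=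
        gammaDown_prefix (by omega)
      have := hpre.length_le
      rw [← hP] at this
      omega
  rw [htake, List.count_append, hcount_take, hcountP, hfilter]
  rw [show Finset.Icc js (lam 1) = insert js (Finset.Icc (js + 1) (lam 1)) by
    ext t; simp [Finset.mem_Icc]; omega]
  rw [Finset.filter_insert, if_pos ⟨hb2, hb3⟩,
    Finset.card_insert_of_notMem (by simp [Finset.mem_Icc])]
  rw [Finset.card_filter]
  rw [Finset.sum_congr rfl hterm]

end Star


section Core

variable {n : ℕ} {lam : ℕ → ℕ}

lemma core (hn : 2 ≤ n) (hstrict : ∀ i, 1 ≤ i → i < n - 1 → lam (i + 1) < lam i) :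
    ∀ (J : Finset ℕ), J ⊆ Finset.range (GammaChain n lam).length →
    ∀ u ∈ Finset.Icc 1 n,
      muWeight n lam J u
        = ∑ j ∈ Finset.Icc 1 (lam 1),
            (if (prodSel (GammaDown n lam (j + 1)) J)⁻¹ u ∈ Finset.Icc 1 (conj n lam j)
              then (1 : ℤ) else 0) := by
  intro J
  induction J using Finset.strongInduction with
  | _ J ih =>
  intro hJ u hu
  rw [Finset.mem_Icc] at hu
  rcases J.eq_empty_or_nonempty with rfl | hne
  · -- base case: J = ∅
    rw [muWeight, Finset.sort_empty]
    simp only [List.foldr_nil]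
    have hterm : ∀ j ∈ Finset.Icc 1 (lam 1),
        (if (prodSel (GammaDown n lam (j + 1)) ∅)⁻¹ u ∈ Finset.Icc 1 (conj n lam j)
          then (1 : ℤ) else 0)
        = (if u ∈ Finset.Icc 1 (conj n lam j) then (1 : ℤ) else 0) := by
      intro j hj
      rw [prodSel_empty]
      simp
    rw [Finset.sum_congr rfl hterm]
    rcases Nat.lt_or_ge u n with hun | hun
    · have hu2 : u ≤ n - 1 := by omega
      have hlamu : lam u ≤ lam 1 := lam_le_lam1 hstrict hu.1 hu2
      have hterm2 : ∀ j ∈ Finset.Icc 1 (lam 1),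
          (if u ∈ Finset.Icc 1 (conj n lam j) then (1 : ℤ) else 0)
          = (if j ≤ lam u then (1 : ℤ) else 0) := by
        intro j hj
        congr 1
        simp only [Finset.mem_Icc, eq_iff_iff]
        constructor
        · intro h; exact (conj_dual hstrict hu.1 hu2).1 h.2
        · intro h; exact ⟨hu.1, (conj_dual hstrict hu.1 hu2).2 h⟩
      rw [Finset.sum_congr rfl hterm2, Finset.sum_boole]
      rw [show Finset.filter (fun j => j ≤ lam u) (Finset.Icc 1 (lam 1))
            = Finset.Icc 1 (lam u) by
        ext t; simp only [Finset.mem_filter, Finset.mem_Icc]; omega]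
      rw [lamVec, if_pos ⟨hu.1, hu2⟩]
      simp [Nat.card_Icc]
    · have hun' : u = n := by omega
      have hterm2 : ∀ j ∈ Finset.Icc 1 (lam 1),
          (if u ∈ Finset.Icc 1 (conj n lam j) then (1 : ℤ) else 0) = 0 := by
        intro j hj
        rw [if_neg]
        simp only [Finset.mem_Icc]
        intro h
        have := conj_le (n := n) (lam := lam) j
        omega
      rw [Finset.sum_congr rfl hterm2]
      rw [lamVec, if_neg (by omega)]
      simp
  · -- inductive step
    set p := J.min' hne with hpdef
    have hpJ : p ∈ J := J.min'_mem hne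
    have hmin : ∀ t ∈ J, p ≤ t := fun t ht => Finset.min'_le J t ht
    have hpN : p < (GammaChain n lam).length := by
      have := hJ hpJ; simpa using this
    set J' := J.erase p with hJ'def
    have hJ'sub : J' ⊆ Finset.range (GammaChain n lam).length :=
      fun t ht => hJ (Finset.mem_of_mem_erase ht)
    have hss : J' ⊂ J := Finset.erase_ssubset hpJ
    have IH := ih J' hss hJ'sub
    obtain ⟨hb1, hab, hbn, hcnt⟩ := star p hpN
    set β := (GammaChain n lam).getD p (0, 0) with hβ
    set l : ℤ := (((GammaChain n lam).take (p + 1)).count β : ℤ) with hl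
    have hsort : J.sort (· ≤ ·) = p :: J'.sort (· ≤ ·) := by
      conv_lhs => rw [← Finset.insert_erase hpJ]
      exact Finset.sort_insert (· ≤ ·)
        (fun b hb => hmin b (Finset.mem_of_mem_erase hb)) (Finset.notMem_erase p J)
    have hmu : ∀ t, muWeight n lam J t = rhat n lam p (muWeight n lam J') t := by
      intro t
      rw [muWeight, hsort, List.foldr_cons]
      rfl
    have hrhat : ∀ (v : ℕ → ℤ) (t : ℕ), rhat n lam p v t
        = v t - (v β.1 - v β.2 - l) *
            ((if t = β.1 then 1 else 0) - (if t = β.2 then 1 else 0)) := fun v t => rfl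
    have hswap : ∀ j, 1 ≤ j → ¬ ((GammaDown n lam (j + 1)).length ≤ p) →
        prodSel (GammaDown n lam (j + 1)) J
          = Equiv.swap β.1 β.2 * prodSel (GammaDown n lam (j + 1)) J' := by
      intro j hj hgt
      push_neg at hgt
      have hpre : GammaDown n lam (j + 1) <+: GammaChain n lam := by
        rw [gammaChain_eq]; exact gammaDown_prefix (by omega)
      have hgetD : (GammaDown n lam (j + 1)).getD p (0, 0) = β := by
        rw [List.getD_eq_getElem _ _ hgt, hβ, List.getD_eq_getElem _ _ hpN]
        exact hpre.getElem hgt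
      rw [prodSel_min_erase _ J p hpJ hmin hgt, hgetD]
    have honeJ : ∀ j, (GammaDown n lam (j + 1)).length ≤ p →
        prodSel (GammaDown n lam (j + 1)) J = 1 :=
      fun j hle => prodSel_eq_one _ _ (fun t ht => le_trans hle (hmin t ht))
    have honeJ' : ∀ j, (GammaDown n lam (j + 1)).length ≤ p →
        prodSel (GammaDown n lam (j + 1)) J' = 1 :=
      fun j hle => prodSel_eq_one _ _
        (fun t ht => le_trans hle (hmin t (Finset.mem_of_mem_erase ht)))
    have hmema : β.1 ∈ Finset.Icc 1 n := by rw [Finset.mem_Icc]; omega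
    have hmemb : β.2 ∈ Finset.Icc 1 n := by rw [Finset.mem_Icc]; omega
    have IHa := IH β.1 hmema
    have IHb := IH β.2 hmemb
    -- the key counting identity
    have e2 : ∑ j ∈ Finset.Icc 1 (lam 1),
        (if (GammaDown n lam (j + 1)).length ≤ p
          then (if β.1 ∈ Finset.Icc 1 (conj n lam j) then (1 : ℤ) else 0)
            - (if β.2 ∈ Finset.Icc 1 (conj n lam j) then (1 : ℤ) else 0)
          else 0) = l := by
      have hc : ∀ j ∈ Finset.Icc 1 (lam 1),
          (if (GammaDown n lam (j + 1)).length ≤ p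
            then (if β.1 ∈ Finset.Icc 1 (conj n lam j) then (1 : ℤ) else 0)
              - (if β.2 ∈ Finset.Icc 1 (conj n lam j) then (1 : ℤ) else 0)
            else 0)
          = (if ((GammaDown n lam (j + 1)).length ≤ p ∧
              β.1 ≤ conj n lam j ∧ conj n lam j < β.2) then (1 : ℤ) else 0) := by
        intro j hj
        simp only [Finset.mem_Icc]
        split_ifs <;> omega
      rw [Finset.sum_congr rfl hc, Finset.sum_boole, ← hcnt]
    by_cases hua : u = β.1
    · have hub : u ≠ β.2 := by rw [hua]; omega
      rw [hmu u, hrhat, if_pos hua, if_neg hub]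
      have e1 : ∑ j ∈ Finset.Icc 1 (lam 1),
          (if (prodSel (GammaDown n lam (j + 1)) J)⁻¹ u ∈ Finset.Icc 1 (conj n lam j)
            then (1 : ℤ) else 0)
          - ∑ j ∈ Finset.Icc 1 (lam 1),
          (if (prodSel (GammaDown n lam (j + 1)) J')⁻¹ β.2 ∈ Finset.Icc 1 (conj n lam j)
            then (1 : ℤ) else 0)
          = ∑ j ∈ Finset.Icc 1 (lam 1),
          (if (GammaDown n lam (j + 1)).length ≤ p
            then (if β.1 ∈ Finset.Icc 1 (conj n lam j) then (1 : ℤ) else 0)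
              - (if β.2 ∈ Finset.Icc 1 (conj n lam j) then (1 : ℤ) else 0)
            else 0) := by
        rw [← Finset.sum_sub_distrib]
        refine Finset.sum_congr rfl (fun j hj => ?_)
        rw [Finset.mem_Icc] at hj
        by_cases hle : (GammaDown n lam (j + 1)).length ≤ p
        · rw [if_pos hle, honeJ j hle, honeJ' j hle]
          simp only [inv_one, Equiv.Perm.one_apply, hua]
        · rw [if_neg hle, hswap j hj.1 hle]
          rw [mul_inv_rev, Equiv.swap_inv, Equiv.Perm.mul_apply, hua,
            Equiv.swap_apply_left]
          ring
      have hMu : muWeight n lam J' u = muWeight n lam J' β.1 := by rw [hua]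
      linarith [e1, e2, IHb, hMu]
    · by_cases hub : u = β.2
      · rw [hmu u, hrhat, if_neg hua, if_pos hub]
        have e2' : ∑ j ∈ Finset.Icc 1 (lam 1),
            (if (GammaDown n lam (j + 1)).length ≤ p
              then (if β.2 ∈ Finset.Icc 1 (conj n lam j) then (1 : ℤ) else 0)
                - (if β.1 ∈ Finset.Icc 1 (conj n lam j) then (1 : ℤ) else 0)
              else 0) = -l := by
          have hneg : ∀ j ∈ Finset.Icc 1 (lam 1),
              (if (GammaDown n lam (j + 1)).length ≤ p
                then (if β.2 ∈ Finset.Icc 1 (conj n lam j) then (1 : ℤ) else 0)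
                  - (if β.1 ∈ Finset.Icc 1 (conj n lam j) then (1 : ℤ) else 0)
                else 0)
              = -(if (GammaDown n lam (j + 1)).length ≤ p
                then (if β.1 ∈ Finset.Icc 1 (conj n lam j) then (1 : ℤ) else 0)
                  - (if β.2 ∈ Finset.Icc 1 (conj n lam j) then (1 : ℤ) else 0)
                else 0) := by
            intro j hj
            split_ifs <;> ring
          rw [Finset.sum_congr rfl hneg, Finset.sum_neg_distrib, e2]
        have e1 : ∑ j ∈ Finset.Icc 1 (lam 1),
            (if (prodSel (GammaDown n lam (j + 1)) J)⁻¹ u ∈ Finset.Icc 1 (conj n lam j)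
              then (1 : ℤ) else 0)
            - ∑ j ∈ Finset.Icc 1 (lam 1),
            (if (prodSel (GammaDown n lam (j + 1)) J')⁻¹ β.1 ∈ Finset.Icc 1 (conj n lam j)
              then (1 : ℤ) else 0)
            = ∑ j ∈ Finset.Icc 1 (lam 1),
            (if (GammaDown n lam (j + 1)).length ≤ p
              then (if β.2 ∈ Finset.Icc 1 (conj n lam j) then (1 : ℤ) else 0)
                - (if β.1 ∈ Finset.Icc 1 (conj n lam j) then (1 : ℤ) else 0)
              else 0) := by
          rw [← Finset.sum_sub_distrib]
          refine Finset.sum_congr rfl (fun j hj => ?_)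
          rw [Finset.mem_Icc] at hj
          by_cases hle : (GammaDown n lam (j + 1)).length ≤ p
          · rw [if_pos hle, honeJ j hle, honeJ' j hle]
            simp only [inv_one, Equiv.Perm.one_apply, hub]
          · rw [if_neg hle, hswap j hj.1 hle]
            rw [mul_inv_rev, Equiv.swap_inv, Equiv.Perm.mul_apply, hub,
              Equiv.swap_apply_right]
            ring
        have hMu : muWeight n lam J' u = muWeight n lam J' β.2 := by rw [hub]
        linarith [e1, e2', IHa, hMu]
      · rw [hmu u, hrhat, if_neg hua, if_neg hub]
        have e1 : ∑ j ∈ Finset.Icc 1 (lam 1),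
            (if (prodSel (GammaDown n lam (j + 1)) J)⁻¹ u ∈ Finset.Icc 1 (conj n lam j)
              then (1 : ℤ) else 0)
            = ∑ j ∈ Finset.Icc 1 (lam 1),
            (if (prodSel (GammaDown n lam (j + 1)) J')⁻¹ u ∈ Finset.Icc 1 (conj n lam j)
              then (1 : ℤ) else 0) := by
          refine Finset.sum_congr rfl (fun j hj => ?_)
          rw [Finset.mem_Icc] at hj
          by_cases hle : (GammaDown n lam (j + 1)).length ≤ p
          · rw [honeJ j hle, honeJ' j hle]
          · rw [hswap j hj.1 hle, mul_inv_rev, Equiv.swap_inv, Equiv.Perm.mul_apply,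
              Equiv.swap_apply_of_ne_of_ne hua hub]
        have IHu := IH u (by rw [Finset.mem_Icc]; exact hu)
        linarith [e1, IHu]

end Core


lemma symm_mem {n : ℕ} {w : Equiv.Perm ℕ} (hw : IsSnPerm n w) {i : ℕ}
    (hi : i ∈ Finset.Icc 1 n) : w.symm i ∈ Finset.Icc 1 n := by
  by_contra hc
  have h2 := (hw (w.symm i)).2 hc
  rw [Equiv.apply_symm_apply] at h2
  rw [← h2] at hc
  exact hc hi

theorem content_eq_weight (n : ℕ) (lam : ℕ → ℕ) (hn : 2 ≤ n)
    (hstrict : ∀ i, 1 ≤ i → i < n - 1 → lam (i + 1) < lam i)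
    (hpos : 0 < lam (n - 1))
    (w : Equiv.Perm ℕ) (hw : IsSnPerm n w)
    (J : Finset ℕ) (hJ : J ⊆ Finset.range (GammaChain n lam).length) :
    ∃ cst : ℤ, ∀ i ∈ Finset.Icc 1 n,
      content n lam (fillingMap n lam w J) i
        = muWeight n lam J (w.symm i) + cst := by
  refine ⟨0, fun i hi => ?_⟩
  rw [add_zero]
  -- step 1: content as a double sum over rows and columns
  have hcard : ((cells n lam).filter fun c => fillingMap n lam w J c = i).card
      = ∑ a ∈ Finset.Icc 1 (n - 1),
          ((Finset.Icc 1 (lam a)).filter fun j => piPerm n lam w J j a = i).card := by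
    rw [cells, Finset.filter_biUnion, Finset.card_biUnion]
    · refine Finset.sum_congr rfl (fun a ha => ?_)
      rw [Finset.singleton_product, Finset.filter_map, Finset.card_map]
      rfl
    · intro a ha a' ha' haa'
      simp only [Function.onFun]
      rw [Finset.disjoint_left]
      intro c hc hc'
      rw [Finset.mem_filter, Finset.mem_product] at hc hc'
      have h1 : c.1 = a := by simpa using hc.1.1
      have h2 : c.1 = a' := by simpa using hc'.1.1
      exact haa' (h1 ▸ h2)
  rw [content, hcard]
  push_cast
  -- step 2: row sums as indicator sums over the full column range
  have hrow : ∀ a ∈ Finset.Icc 1 (n - 1),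
      (((Finset.Icc 1 (lam a)).filter fun j => piPerm n lam w J j a = i).card : ℤ)
        = ∑ j ∈ Finset.Icc 1 (lam 1),
            (if j ≤ lam a ∧ piPerm n lam w J j a = i then (1 : ℤ) else 0) := by
    intro a ha
    rw [Finset.mem_Icc] at ha
    rw [Finset.card_filter]
    push_cast
    rw [show ∑ j ∈ Finset.Icc 1 (lam a),
          (if piPerm n lam w J j a = i then (1 : ℤ) else 0)
        = ∑ j ∈ Finset.Icc 1 (lam a),
          (if j ≤ lam a ∧ piPerm n lam w J j a = i then (1 : ℤ) else 0) from
      Finset.sum_congr rfl (fun j hj => by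
        rw [Finset.mem_Icc] at hj
        by_cases hp : piPerm n lam w J j a = i <;> simp [hp, hj.2])]
    refine Finset.sum_subset ?_ ?_
    · intro j hj
      rw [Finset.mem_Icc] at hj ⊢
      exact ⟨hj.1, le_trans hj.2 (lam_le_lam1 hstrict ha.1 ha.2)⟩
    · intro j hj hj'
      rw [Finset.mem_Icc] at hj
      rw [if_neg]
      rintro ⟨hle, -⟩
      exact hj' (Finset.mem_Icc.2 ⟨hj.1, hle⟩)
  rw [Finset.sum_congr rfl hrow, Finset.sum_comm]
  -- step 3: inner sums over rows become membership indicators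
  have hcol : ∀ j ∈ Finset.Icc 1 (lam 1),
      (∑ a ∈ Finset.Icc 1 (n - 1),
        (if j ≤ lam a ∧ piPerm n lam w J j a = i then (1 : ℤ) else 0))
      = (if (piPerm n lam w J j)⁻¹ i ∈ Finset.Icc 1 (conj n lam j)
          then (1 : ℤ) else 0) := by
    intro j hj
    have hdual : ∀ a ∈ Finset.Icc 1 (n - 1),
        (if j ≤ lam a ∧ piPerm n lam w J j a = i then (1 : ℤ) else 0)
          = (if a ≤ conj n lam j ∧ piPerm n lam w J j a = i then (1 : ℤ) else 0) := by
      intro a ha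
      rw [Finset.mem_Icc] at ha
      congr 1
      rw [eq_iff_iff, (conj_dual hstrict ha.1 ha.2)]
    rw [Finset.sum_congr rfl hdual, Finset.sum_boole]
    by_cases hmem : (piPerm n lam w J j)⁻¹ i ∈ Finset.Icc 1 (conj n lam j)
    · rw [if_pos hmem]
      rw [Finset.mem_Icc] at hmem
      rw [show Finset.filter (fun a => a ≤ conj n lam j ∧ piPerm n lam w J j a = i)
            (Finset.Icc 1 (n - 1)) = {(piPerm n lam w J j)⁻¹ i} by
        ext a
        simp only [Finset.mem_filter, Finset.mem_Icc, Finset.mem_singleton]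
        constructor
        · rintro ⟨-, -, hpa⟩
          exact Equiv.Perm.eq_inv_iff_eq.2 hpa
        · rintro rfl
          have hc := conj_le (n := n) (lam := lam) j
          exact ⟨⟨hmem.1, by omega⟩, hmem.2, Equiv.Perm.eq_inv_iff_eq.1 rfl⟩]
      simp
    · rw [if_neg hmem]
      rw [show Finset.filter (fun a => a ≤ conj n lam j ∧ piPerm n lam w J j a = i)
            (Finset.Icc 1 (n - 1)) = ∅ by
        ext a
        simp only [Finset.mem_filter, Finset.mem_Icc, Finset.notMem_empty, iff_false]
        rintro ⟨⟨h1, -⟩, h2, h3⟩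
        have ha := Equiv.Perm.eq_inv_iff_eq.2 h3
        apply hmem
        rw [← ha]
        exact Finset.mem_Icc.2 ⟨h1, h2⟩]
      simp
  rw [Finset.sum_congr rfl hcol]
  -- step 4: apply the core identity with u = w.symm i
  have hpi : ∀ j, (piPerm n lam w J j)⁻¹ i
      = (prodSel (GammaDown n lam (j + 1)) J)⁻¹ (w.symm i) := by
    intro j
    rw [piPerm, mul_inv_rev, Equiv.Perm.mul_apply]
    rfl
  rw [Finset.sum_congr rfl (fun j _ => by rw [hpi j])]
  exact (core hn hstrict J hJ (w.symm i) (symm_mem hw hi)).symm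

end Stmt8
end

section
/- Let τ be a filling of a strict partition λ (type C setting, entries in [n̄]) whose rows weakly decrease left to right, and such that two entries a,b with a = ±b never occur in the same column nor in consecutive columns at positions (i,j) and (k,j−1) with i > k. Let τ² be the filling of 2λ obtained by doubling each column. Then there is a unique filling σ ∈ T(λ̂, n̄) whose compressed version σ̄ equals τ². -/
/-!
Statement 15: Let τ be a filling of a strict partition λ (type C setting, entries in
[n̄]) with weakly decreasing rows, such that entries a, b with a = ±b never occur in the
same column nor in consecutive columns at positions (i,j), (k,j-1) with i > k.  Let τ²
be the filling of 2λ doubling each column.  Then there is a unique filling σ ∈ T(λ̂,n̄)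
whose compressed version σ̄ equals τ².  (Fillings of λ̂ are normalized to vanish outside
the diagram, so uniqueness is uniqueness of the filling.)
-/

namespace Stmt15



def conjC (n : ℕ) (lam : ℕ → ℕ) (j : ℕ) : ℕ :=
  ((Finset.Icc 1 n).filter fun i => j ≤ lam i).card

/-- the position of x in the linear order [n̄] = {1 < ⋯ < n < n̄ < ⋯ < 1̄} (ī = -i) -/
def mval (n : ℕ) (x : ℤ) : ℤ := if 0 < x then x else 2 * n + 1 + x

/-- strict order on [n̄] -/
def olt (n : ℕ) (x y : ℤ) : Prop := mval n x < mval n y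

instance (n : ℕ) (x y : ℤ) : Decidable (olt n x y) := by unfold olt; infer_instance

/-- weak order on [n̄] -/
def cle (n : ℕ) (x y : ℤ) : Prop := mval n x ≤ mval n y

instance (n : ℕ) (x y : ℤ) : Decidable (cle n x y) := by unfold cle; infer_instance

def ValidEntry (n : ℕ) (x : ℤ) : Prop := x ≠ 0 ∧ |x| ≤ (n : ℤ)

/-- `C(r,j̄)`: transpose positions r, j and change the signs of the transposed entries -/
def opCol (D : ℕ → ℤ) (r j : ℕ) : ℕ → ℤ :=
  fun t => if t = r then -(D j) else if t = j then -(D r) else D t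

/-- `C(r₁,j̄)⋯(r_p,j̄)` for rs = [r₁,…,r_p] -/
def applyRs (D : ℕ → ℤ) (j : ℕ) (rs : List ℕ) : ℕ → ℤ :=
  rs.foldl (fun E r => opCol E r j) D

/-- a valid column of height d: entries in [n̄], no two entries equal up to sign -/
def ColCond (n d : ℕ) (C : ℕ → ℤ) : Prop :=
  (∀ t ∈ Finset.Icc 1 d, ValidEntry n (C t)) ∧
  (∀ s ∈ Finset.Icc 1 d, ∀ t ∈ Finset.Icc 1 d, s ≠ t → C s ≠ C t ∧ C s ≠ -C t)

/-- a filling of the doubled shape λ̂, given by its columns C_{ij} and C'_{ik} -/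
structure FillC where
  Cc : ℕ → ℕ → ℕ → ℤ
  Cp : ℕ → ℕ → ℕ → ℤ

/-- the unprimed column indices of block i (block 1 consists of C_{11} only) -/
def jRange (n : ℕ) (lam : ℕ → ℕ) (i : ℕ) : Finset ℕ :=
  if i = 1 then {1} else Finset.Icc 1 (conjC n lam i)

/-- the right neighbour C_{i,j+1} of C_{ij}, with the conventions
C_{i,λ'_i+1} = C'_{i-1,2} (or C_{i-1,1} if λ'_{i-1} = 1) -/
def nextU (n : ℕ) (lam : ℕ → ℕ) (F : FillC) (i j : ℕ) : ℕ → ℤ :=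
  if j < conjC n lam i then F.Cc i (j + 1)
  else if conjC n lam (i - 1) = 1 then F.Cc (i - 1) 1 else F.Cp (i - 1) 2

/-- the right neighbour C'_{i,k+1} of C'_{ik}, with the convention C'_{i,λ'_i+1} = C_{i1} -/
def nextP (n : ℕ) (lam : ℕ → ℕ) (F : FillC) (i k : ℕ) : ℕ → ℤ :=
  if k < conjC n lam i then F.Cp i (k + 1) else F.Cc i 1

/-- the relation between C_{ij} and C_{i,j+1}: there are positions r₁ < ⋯ < r_p < j such
that C_{i,j+1} differs from D = C_{ij}(r₁,j̄)⋯(r_p,j̄) only in position j, while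
C_{i,j+1}(j) ∉ {±D(r) : r ∈ [d] \ {j}} and C_{i,j+1}(j) ≤ D(j) -/
def UnprimedRel (n d j : ℕ) (D E : ℕ → ℤ) : Prop :=
  ∃ rs : List ℕ, rs.Chain' (· < ·) ∧ (∀ r ∈ rs, 1 ≤ r ∧ r < j) ∧
    (∀ t ∈ Finset.Icc 1 d, t ≠ j → E t = applyRs D j rs t) ∧
    (∀ r ∈ Finset.Icc 1 d, r ≠ j → E j ≠ applyRs D j rs r ∧ E j ≠ -(applyRs D j rs r)) ∧
    cle n (E j) (applyRs D j rs j)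

/-- the relation between C'_{ik} and C'_{i,k+1}: C'_{i,k+1} = C'_{ik}(r₁,k̄)⋯(r_p,k̄)
for some positions r₁ < ⋯ < r_p < k -/
def PrimedRel (d k : ℕ) (D E : ℕ → ℤ) : Prop :=
  ∃ rs : List ℕ, rs.Chain' (· < ·) ∧ (∀ r ∈ rs, 1 ≤ r ∧ r < k) ∧
    ∀ t ∈ Finset.Icc 1 d, E t = applyRs D k rs t

/-- membership in T(λ̂,n̄): rows weakly decreasing left to right, no column containing
a,b with a = ±b, and adjacent columns related by the prescribed reflections -/
def MemT (n : ℕ) (lam : ℕ → ℕ) (F : FillC) : Prop :=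
  (∀ i ∈ Finset.Icc 1 (lam 1),
    (∀ j ∈ jRange n lam i, ColCond n (conjC n lam i) (F.Cc i j)) ∧
    (∀ k ∈ Finset.Icc 2 (conjC n lam i), ColCond n (conjC n lam i) (F.Cp i k))) ∧
  (∀ i ∈ Finset.Icc 2 (lam 1), ∀ j ∈ Finset.Icc 1 (conjC n lam i),
    UnprimedRel n (conjC n lam i) j (F.Cc i j) (nextU n lam F i j) ∧
    ∀ t ∈ Finset.Icc 1 (conjC n lam i),
      cle n (nextU n lam F i j t) (F.Cc i j t)) ∧
  (∀ i ∈ Finset.Icc 1 (lam 1), ∀ k ∈ Finset.Icc 2 (conjC n lam i),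
    PrimedRel (conjC n lam i) k (F.Cp i k) (nextP n lam F i k) ∧
    ∀ t ∈ Finset.Icc 1 (conjC n lam i),
      cle n (nextP n lam F i k t) (F.Cp i k t))

/-- normalization: zero outside the meaningful range of indices -/
def NormF (n : ℕ) (lam : ℕ → ℕ) (F : FillC) : Prop :=
  (∀ i j t, ¬(i ∈ Finset.Icc 1 (lam 1) ∧ j ∈ jRange n lam i ∧
      t ∈ Finset.Icc 1 (conjC n lam i)) → F.Cc i j t = 0) ∧
  (∀ i k t, ¬(i ∈ Finset.Icc 1 (lam 1) ∧ k ∈ Finset.Icc 2 (conjC n lam i) ∧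
      t ∈ Finset.Icc 1 (conjC n lam i)) → F.Cp i k t = 0)

/-- the column C'_{i2} of the compressed filling σ̄ (with the conventions: it is C_{i1}
when λ'_i = 1) -/
def col2 (n : ℕ) (lam : ℕ → ℕ) (F : FillC) (i : ℕ) : ℕ → ℤ :=
  if 2 ≤ conjC n lam i then F.Cp i 2 else F.Cc i 1

/-- number of occurrences of the entry v in the compressed filling σ̄ of shape 2λ -/
def cntEnt (n : ℕ) (lam : ℕ → ℕ) (F : FillC) (v : ℤ) : ℕ :=
  ∑ i ∈ Finset.Icc 1 (lam 1),
    (((Finset.Icc 1 (conjC n lam i)).filter fun t => col2 n lam F i t = v).card +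
     ((Finset.Icc 1 (conjC n lam i)).filter fun t => F.Cc i 1 t = v).card)

/-- τ is an admissible filling of λ (given by its columns tcol i of height λ'_i):
entries in [n̄], rows weakly decreasing left to right, and no pair a = ±b in the same
column or in consecutive columns at positions (i,j), (k,j-1) with i > k -/
def TauCond (n : ℕ) (lam : ℕ → ℕ) (tcol : ℕ → ℕ → ℤ) : Prop :=
  (∀ c ∈ Finset.Icc 1 (lam 1), ∀ t ∈ Finset.Icc 1 (conjC n lam c),
    ValidEntry n (tcol c t)) ∧
  (∀ c ∈ Finset.Icc 1 (lam 1 - 1), ∀ t ∈ Finset.Icc 1 (conjC n lam (c + 1)),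
    cle n (tcol c t) (tcol (c + 1) t)) ∧
  (∀ c ∈ Finset.Icc 1 (lam 1), ∀ s ∈ Finset.Icc 1 (conjC n lam c),
    ∀ t ∈ Finset.Icc 1 (conjC n lam c), s ≠ t →
      tcol c s ≠ tcol c t ∧ tcol c s ≠ -(tcol c t)) ∧
  (∀ c ∈ Finset.Icc 2 (lam 1), ∀ r ∈ Finset.Icc 1 (conjC n lam c),
    ∀ s ∈ Finset.Icc 1 (conjC n lam (c - 1)), s < r →
      tcol c r ≠ tcol (c - 1) s ∧ tcol c r ≠ -(tcol (c - 1) s))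

/-- the compressed version σ̄ of σ equals τ² (the column-doubling of τ) -/
def CompressEq (n : ℕ) (lam : ℕ → ℕ) (F : FillC) (tcol : ℕ → ℕ → ℤ) : Prop :=
  ∀ i ∈ Finset.Icc 1 (lam 1), ∀ t ∈ Finset.Icc 1 (conjC n lam i),
    col2 n lam F i t = tcol i t ∧ F.Cc i 1 t = tcol i t


/-! ### Auxiliary lemmas -/

lemma mval_inj {n : ℕ} {x y : ℤ} (hx : ValidEntry n x) (hy : ValidEntry n y)
    (h : mval n x = mval n y) : x = y := by
  obtain ⟨hx0, hx1⟩ := hx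
  obtain ⟨hy0, hy1⟩ := hy
  rw [abs_le] at hx1 hy1
  unfold mval at h
  split_ifs at h <;> omega

lemma cle_refl (n : ℕ) (x : ℤ) : cle n x x := le_refl _

lemma cle_antisymm {n : ℕ} {x y : ℤ} (hx : ValidEntry n x) (hy : ValidEntry n y)
    (h1 : cle n x y) (h2 : cle n y x) : x = y := mval_inj hx hy (le_antisymm h1 h2)

lemma conjC_le (n : ℕ) (lam : ℕ → ℕ) {a b : ℕ} (h : a ≤ b) :
    conjC n lam b ≤ conjC n lam a := by
  apply Finset.card_le_card
  intro x hx
  simp only [Finset.mem_filter] at hx ⊢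
  exact ⟨hx.1, le_trans h hx.2⟩

lemma conjC_pos (n : ℕ) (lam : ℕ → ℕ) (hn : 1 ≤ n) {i : ℕ} (h2 : i ≤ lam 1) :
    1 ≤ conjC n lam i := by
  have : (1 : ℕ) ∈ (Finset.Icc 1 n).filter fun k => i ≤ lam k := by
    simp only [Finset.mem_filter, Finset.mem_Icc]
    omega
  have := Finset.card_pos.mpr ⟨1, this⟩
  unfold conjC
  omega

lemma applyRs_not_mem (D : ℕ → ℤ) (j : ℕ) (rs : List ℕ) (t : ℕ)
    (h1 : t ∉ rs) (h2 : t ≠ j) : applyRs D j rs t = D t := by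
  induction rs generalizing D with
  | nil => rfl
  | cons r rest ih =>
    simp only [List.mem_cons, not_or] at h1
    show applyRs (opCol D r j) j rest t = D t
    rw [ih _ h1.2]
    unfold opCol
    rw [if_neg h1.1, if_neg h2]

lemma applyRs_head (D : ℕ → ℤ) (j r : ℕ) (rest : List ℕ)
    (h1 : r ∉ rest) (h2 : r ≠ j) : applyRs D j (r :: rest) r = -(D j) := by
  show applyRs (opCol D r j) j rest r = _
  rw [applyRs_not_mem _ _ _ _ h1 h2]
  unfold opCol
  rw [if_pos rfl]

lemma mem_jRange (n : ℕ) (lam : ℕ → ℕ) {i j : ℕ} (hj1 : 1 ≤ j) (hj2 : j ≤ conjC n lam i)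
    (h : i = 1 → j = 1) : j ∈ jRange n lam i := by
  unfold jRange
  split_ifs with h1
  · simp [h h1]
  · exact Finset.mem_Icc.mpr ⟨hj1, hj2⟩

lemma jRange_spec {n : ℕ} {lam : ℕ → ℕ} {i j : ℕ} (h : j ∈ jRange n lam i)
    (hd : 1 ≤ conjC n lam i) : 1 ≤ j ∧ j ≤ conjC n lam i := by
  unfold jRange at h
  split_ifs at h with h1
  · simp only [Finset.mem_singleton] at h
    omega
  · exact Finset.mem_Icc.mp h

lemma jRange_one {n : ℕ} {lam : ℕ → ℕ} {j : ℕ} (h : j ∈ jRange n lam 1) : j = 1 := by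
  unfold jRange at h
  rw [if_pos rfl] at h
  simpa using h

/-- the candidate filling: C_{ij}(t) = τ_{i-1}(t) for t < j, τ_i(t) for t ≥ j;
all primed columns equal to τ_i. -/
def cand (n : ℕ) (lam : ℕ → ℕ) (tcol : ℕ → ℕ → ℤ) : FillC where
  Cc := fun i j t =>
    if 1 ≤ i ∧ i ≤ lam 1 ∧ j ∈ jRange n lam i ∧ 1 ≤ t ∧ t ≤ conjC n lam i then
      (if t < j then tcol (i - 1) t else tcol i t) else 0
  Cp := fun i k t =>
    if 1 ≤ i ∧ i ≤ lam 1 ∧ 2 ≤ k ∧ k ≤ conjC n lam i ∧ 1 ≤ t ∧ t ≤ conjC n lam i then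
      tcol i t else 0

lemma cand_Cc (n : ℕ) (lam : ℕ → ℕ) (tcol : ℕ → ℕ → ℤ) {i j t : ℕ}
    (h1 : 1 ≤ i) (h2 : i ≤ lam 1) (h3 : j ∈ jRange n lam i) (h4 : 1 ≤ t)
    (h5 : t ≤ conjC n lam i) :
    (cand n lam tcol).Cc i j t = if t < j then tcol (i - 1) t else tcol i t := by
  simp only [cand]
  rw [if_pos ⟨h1, h2, h3, h4, h5⟩]

lemma cand_Cp (n : ℕ) (lam : ℕ → ℕ) (tcol : ℕ → ℕ → ℤ) {i k t : ℕ}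
    (h1 : 1 ≤ i) (h2 : i ≤ lam 1) (h3 : 2 ≤ k) (h4 : k ≤ conjC n lam i) (h5 : 1 ≤ t)
    (h6 : t ≤ conjC n lam i) :
    (cand n lam tcol).Cp i k t = tcol i t := by
  simp only [cand]
  rw [if_pos ⟨h1, h2, h3, h4, h5, h6⟩]
theorem unique_filling_compressing_to_tau (n : ℕ) (lam : ℕ → ℕ) (hn : 2 ≤ n)
    (hstrict : ∀ i, 1 ≤ i → i < n → lam (i + 1) < lam i)
    (hpos : 0 < lam n) (hlen : ∀ i, n < i → lam i = 0)
    (tcol : ℕ → ℕ → ℤ) (hτ : TauCond n lam tcol) :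
    ∃! F : FillC, MemT n lam F ∧ NormF n lam F ∧ CompressEq n lam F tcol := by
  have hn1 : 1 ≤ n := by omega
  obtain ⟨hV, hRow, hCol, hAdj⟩ := hτ
  have hval : ∀ i, 1 ≤ i → i ≤ lam 1 → ∀ t, 1 ≤ t → t ≤ conjC n lam i →
      ValidEntry n (tcol i t) := by
    intro i h1 h2 t h3 h4
    exact hV i (Finset.mem_Icc.mpr ⟨h1, h2⟩) t (Finset.mem_Icc.mpr ⟨h3, h4⟩)
  have hcol' : ∀ i, 1 ≤ i → i ≤ lam 1 → ∀ s t, 1 ≤ s → s ≤ conjC n lam i →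
      1 ≤ t → t ≤ conjC n lam i → s ≠ t →
      tcol i s ≠ tcol i t ∧ tcol i s ≠ -(tcol i t) := by
    intro i h1 h2 s t hs1 hs2 ht1 ht2 hst
    exact hCol i (Finset.mem_Icc.mpr ⟨h1, h2⟩) s (Finset.mem_Icc.mpr ⟨hs1, hs2⟩) t
      (Finset.mem_Icc.mpr ⟨ht1, ht2⟩) hst
  have hadj' : ∀ i, 2 ≤ i → i ≤ lam 1 → ∀ r, 1 ≤ r → r ≤ conjC n lam i →
      ∀ s, 1 ≤ s → s < r →
      tcol i r ≠ tcol (i - 1) s ∧ tcol i r ≠ -(tcol (i - 1) s) := by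
    intro i h1 h2 r hr1 hr2 s hs1 hs2
    have hm : conjC n lam i ≤ conjC n lam (i - 1) := conjC_le n lam (by omega)
    exact hAdj i (Finset.mem_Icc.mpr ⟨h1, h2⟩) r (Finset.mem_Icc.mpr ⟨hr1, hr2⟩) s
      (Finset.mem_Icc.mpr ⟨hs1, by omega⟩) hs2
  have hrow' : ∀ i, 2 ≤ i → i ≤ lam 1 → ∀ t, 1 ≤ t → t ≤ conjC n lam i →
      cle n (tcol (i - 1) t) (tcol i t) := by
    intro i h1 h2 t ht1 ht2
    have h := hRow (i - 1) (Finset.mem_Icc.mpr ⟨by omega, by omega⟩) t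
      (by rw [show i - 1 + 1 = i by omega]; exact Finset.mem_Icc.mpr ⟨ht1, ht2⟩)
    rwa [show i - 1 + 1 = i by omega] at h
  refine ⟨cand n lam tcol, ⟨?_, ?_, ?_⟩, ?_⟩
  · -- MemT
    refine ⟨?_, ?_, ?_⟩
    · -- column conditions
      intro i hi
      obtain ⟨hi1, hi2⟩ := Finset.mem_Icc.mp hi
      have hd1 : 1 ≤ conjC n lam i := conjC_pos n lam hn1 hi2
      constructor
      · intro j hj
        obtain ⟨hj1, hj2⟩ := jRange_spec hj hd1
        have hi2' : 2 ≤ j → 2 ≤ i := by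
          intro h2j
          by_contra hcon
          have h1 : i = 1 := by omega
          have := jRange_one (h1 ▸ hj)
          omega
        constructor
        · intro t ht
          obtain ⟨ht1, ht2⟩ := Finset.mem_Icc.mp ht
          rw [cand_Cc n lam tcol hi1 hi2 hj ht1 ht2]
          split_ifs with h
          · have h2i : 2 ≤ i := hi2' (by omega)
            exact hval (i - 1) (by omega) (by omega) t ht1
              (le_trans ht2 (conjC_le n lam (by omega)))
          · exact hval i hi1 hi2 t ht1 ht2
        · intro s hs t ht hst
          obtain ⟨hs1, hs2⟩ := Finset.mem_Icc.mp hs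
          obtain ⟨ht1, ht2⟩ := Finset.mem_Icc.mp ht
          rw [cand_Cc n lam tcol hi1 hi2 hj hs1 hs2,
            cand_Cc n lam tcol hi1 hi2 hj ht1 ht2]
          split_ifs with h1 h2 h2
          · -- both < j
            have h2i : 2 ≤ i := hi2' (by omega)
            have hm : conjC n lam i ≤ conjC n lam (i - 1) := conjC_le n lam (by omega)
            exact hcol' (i - 1) (by omega) (by omega) s t hs1 (by omega) ht1 (by omega) hst
          · -- s < j ≤ t
            have h2i : 2 ≤ i := hi2' (by omega)
            have h := hadj' i h2i hi2 t ht1 ht2 s hs1 (by omega)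
            exact ⟨fun he => h.1 he.symm, fun he => h.2 (by omega)⟩
          · -- t < j ≤ s
            have h2i : 2 ≤ i := hi2' (by omega)
            exact hadj' i h2i hi2 s hs1 hs2 t ht1 (by omega)
          · exact hcol' i hi1 hi2 s t hs1 hs2 ht1 ht2 hst
      · intro k hk
        obtain ⟨hk1, hk2⟩ := Finset.mem_Icc.mp hk
        constructor
        · intro t ht
          obtain ⟨ht1, ht2⟩ := Finset.mem_Icc.mp ht
          rw [cand_Cp n lam tcol hi1 hi2 hk1 hk2 ht1 ht2]
          exact hval i hi1 hi2 t ht1 ht2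
        · intro s hs t ht hst
          obtain ⟨hs1, hs2⟩ := Finset.mem_Icc.mp hs
          obtain ⟨ht1, ht2⟩ := Finset.mem_Icc.mp ht
          rw [cand_Cp n lam tcol hi1 hi2 hk1 hk2 hs1 hs2,
            cand_Cp n lam tcol hi1 hi2 hk1 hk2 ht1 ht2]
          exact hcol' i hi1 hi2 s t hs1 hs2 ht1 ht2 hst
    · -- unprimed relations
      intro i hi j hj
      obtain ⟨hi2, hil⟩ := Finset.mem_Icc.mp hi
      obtain ⟨hj1, hj2⟩ := Finset.mem_Icc.mp hj
      have hd1 : 1 ≤ conjC n lam i := conjC_pos n lam hn1 hil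
      have hjm : j ∈ jRange n lam i := mem_jRange n lam hj1 hj2 (fun h => absurd h (by omega))
      have hm : conjC n lam i ≤ conjC n lam (i - 1) := conjC_le n lam (by omega)
      have hd1' : 1 ≤ conjC n lam (i - 1) := conjC_pos n lam hn1 (by omega)
      have hcur : ∀ t, 1 ≤ t → t ≤ conjC n lam i →
          (cand n lam tcol).Cc i j t = if t < j then tcol (i - 1) t else tcol i t :=
        fun t ht1 ht2 => cand_Cc n lam tcol (by omega) hil hjm ht1 ht2
      have hnext : ∀ t, 1 ≤ t → t ≤ conjC n lam i →
          nextU n lam (cand n lam tcol) i j t =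
            if t < j + 1 then tcol (i - 1) t else tcol i t := by
        intro t ht1 ht2
        unfold nextU
        by_cases h : j < conjC n lam i
        · rw [if_pos h, cand_Cc n lam tcol (by omega) hil
            (mem_jRange n lam (by omega) (by omega) (fun h1 => absurd h1 (by omega))) ht1 ht2]
        · rw [if_neg h, if_pos (show t < j + 1 by omega)]
          by_cases h2 : conjC n lam (i - 1) = 1
          · rw [if_pos h2, cand_Cc n lam tcol (by omega) (by omega)
              (mem_jRange n lam le_rfl hd1' (fun _ => rfl)) ht1 (by omega),
              if_neg (show ¬ t < 1 by omega)]
          · rw [if_neg h2, cand_Cp n lam tcol (by omega) (by omega) le_rfl (by omega)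
              ht1 (by omega)]
      constructor
      · refine ⟨[], List.isChain_nil, by simp, ?_, ?_, ?_⟩
        · intro t ht htj
          obtain ⟨ht1, ht2⟩ := Finset.mem_Icc.mp ht
          show nextU n lam (cand n lam tcol) i j t = (cand n lam tcol).Cc i j t
          rw [hnext t ht1 ht2, hcur t ht1 ht2]
          split_ifs with ha hb hb
          · rfl
          · omega
          · omega
          · rfl
        · intro r hr hrj
          obtain ⟨hr1, hr2⟩ := Finset.mem_Icc.mp hr
          have hEj : nextU n lam (cand n lam tcol) i j j = tcol (i - 1) j := by
            rw [hnext j hj1 hj2, if_pos (by omega)]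
          show _ ≠ (cand n lam tcol).Cc i j r ∧ _ ≠ -((cand n lam tcol).Cc i j r)
          rw [hEj, hcur r hr1 hr2]
          split_ifs with h
          · exact hcol' (i - 1) (by omega) (by omega) j r hj1 (by omega) hr1 (by omega)
              (by omega)
          · have ha := hadj' i hi2 hil r hr1 hr2 j hj1 (by omega)
            exact ⟨fun he => ha.1 he.symm, fun he => ha.2 (by omega)⟩
        · show cle n (nextU n lam (cand n lam tcol) i j j) ((cand n lam tcol).Cc i j j)
          rw [hnext j hj1 hj2, if_pos (by omega), hcur j hj1 hj2, if_neg (by omega)]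
          exact hrow' i hi2 hil j hj1 hj2
      · intro t ht
        obtain ⟨ht1, ht2⟩ := Finset.mem_Icc.mp ht
        rw [hnext t ht1 ht2, hcur t ht1 ht2]
        by_cases h1 : t < j
        · rw [if_pos (by omega), if_pos h1]; exact cle_refl n _
        · by_cases h2 : t = j
          · rw [if_pos (by omega), if_neg h1]; subst h2; exact hrow' i hi2 hil t ht1 ht2
          · rw [if_neg (by omega), if_neg h1]; exact cle_refl n _
    · -- primed relations
      intro i hi k hk
      obtain ⟨hi1, hi2⟩ := Finset.mem_Icc.mp hi
      obtain ⟨hk1, hk2⟩ := Finset.mem_Icc.mp hk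
      have hd1 : 1 ≤ conjC n lam i := conjC_pos n lam hn1 hi2
      have hnp : ∀ t, 1 ≤ t → t ≤ conjC n lam i →
          nextP n lam (cand n lam tcol) i k t = tcol i t := by
        intro t ht1 ht2
        unfold nextP
        split_ifs with h
        · exact cand_Cp n lam tcol hi1 hi2 (by omega) (by omega) ht1 ht2
        · rw [cand_Cc n lam tcol hi1 hi2 (mem_jRange n lam le_rfl hd1 (fun _ => rfl)) ht1 ht2]
          rw [if_neg (by omega : ¬ t < 1)]
      constructor
      · refine ⟨[], List.isChain_nil, by simp, ?_⟩
        intro t ht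
        obtain ⟨ht1, ht2⟩ := Finset.mem_Icc.mp ht
        show nextP n lam (cand n lam tcol) i k t = (cand n lam tcol).Cp i k t
        rw [hnp t ht1 ht2, cand_Cp n lam tcol hi1 hi2 hk1 hk2 ht1 ht2]
      · intro t ht
        obtain ⟨ht1, ht2⟩ := Finset.mem_Icc.mp ht
        rw [hnp t ht1 ht2, cand_Cp n lam tcol hi1 hi2 hk1 hk2 ht1 ht2]
        exact cle_refl n _
  · -- NormF
    constructor
    · intro i j t h
      simp only [cand]
      rw [if_neg]
      intro hcon
      exact h ⟨Finset.mem_Icc.mpr ⟨hcon.1, hcon.2.1⟩, hcon.2.2.1,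
        Finset.mem_Icc.mpr ⟨hcon.2.2.2.1, hcon.2.2.2.2⟩⟩
    · intro i k t h
      simp only [cand]
      rw [if_neg]
      intro hcon
      exact h ⟨Finset.mem_Icc.mpr ⟨hcon.1, hcon.2.1⟩,
        Finset.mem_Icc.mpr ⟨hcon.2.2.1, hcon.2.2.2.1⟩,
        Finset.mem_Icc.mpr ⟨hcon.2.2.2.2.1, hcon.2.2.2.2.2⟩⟩
  · -- CompressEq
    intro i hi t ht
    obtain ⟨hi1, hi2⟩ := Finset.mem_Icc.mp hi
    obtain ⟨ht1, ht2⟩ := Finset.mem_Icc.mp ht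
    have hd1 : 1 ≤ conjC n lam i := conjC_pos n lam hn1 hi2
    have hc1 : (cand n lam tcol).Cc i 1 t = tcol i t := by
      rw [cand_Cc n lam tcol hi1 hi2 (mem_jRange n lam le_rfl hd1 (fun _ => rfl)) ht1 ht2]
      rw [if_neg (by omega : ¬ t < 1)]
    constructor
    · unfold col2
      split_ifs with h
      · exact cand_Cp n lam tcol hi1 hi2 le_rfl h ht1 ht2
      · exact hc1
    · exact hc1
  · -- uniqueness
    intro G hG
    obtain ⟨hM, hN, hC⟩ := hG
    obtain ⟨hM1, hM2, hM3⟩ := hM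
    -- primed columns are determined
    have hCpu : ∀ i, 1 ≤ i → i ≤ lam 1 → ∀ k, 2 ≤ k → k ≤ conjC n lam i →
        ∀ t, 1 ≤ t → t ≤ conjC n lam i → G.Cp i k t = tcol i t := by
      intro i hi1 hi2 k hk2 hkd t ht1 ht2
      have hup : ∀ k', 2 ≤ k' → k' ≤ conjC n lam i →
          mval n (G.Cp i k' t) ≤ mval n (tcol i t) := by
        intro k' hk'
        induction k', hk' using Nat.le_induction with
        | base =>
          intro hkd'
          have h2 := (hC i (Finset.mem_Icc.mpr ⟨hi1, hi2⟩) t (Finset.mem_Icc.mpr ⟨ht1, ht2⟩)).1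
          unfold col2 at h2
          rw [if_pos hkd'] at h2
          rw [h2]
        | succ k' hk' ih =>
          intro hkd'
          have hcle := (hM3 i (Finset.mem_Icc.mpr ⟨hi1, hi2⟩) k'
            (Finset.mem_Icc.mpr ⟨hk', by omega⟩)).2 t (Finset.mem_Icc.mpr ⟨ht1, ht2⟩)
          unfold nextP at hcle
          rw [if_pos (show k' < conjC n lam i by omega)] at hcle
          unfold cle at hcle
          exact le_trans hcle (ih (by omega))
      have hdown : ∀ m k', 2 ≤ k' → k' + m = conjC n lam i →
          mval n (tcol i t) ≤ mval n (G.Cp i k' t) := by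
        intro m
        induction m with
        | zero =>
          intro k' hk2' hkd'
          have hcle := (hM3 i (Finset.mem_Icc.mpr ⟨hi1, hi2⟩) k'
            (Finset.mem_Icc.mpr ⟨hk2', by omega⟩)).2 t (Finset.mem_Icc.mpr ⟨ht1, ht2⟩)
          unfold nextP at hcle
          rw [if_neg (show ¬ k' < conjC n lam i by omega)] at hcle
          have h2 := (hC i (Finset.mem_Icc.mpr ⟨hi1, hi2⟩) t (Finset.mem_Icc.mpr ⟨ht1, ht2⟩)).2
          rw [h2] at hcle
          unfold cle at hcle
          exact hcle
        | succ m ih =>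
          intro k' hk2' hkd'
          have hcle := (hM3 i (Finset.mem_Icc.mpr ⟨hi1, hi2⟩) k'
            (Finset.mem_Icc.mpr ⟨hk2', by omega⟩)).2 t (Finset.mem_Icc.mpr ⟨ht1, ht2⟩)
          unfold nextP at hcle
          rw [if_pos (show k' < conjC n lam i by omega)] at hcle
          unfold cle at hcle
          exact le_trans (ih (k' + 1) (by omega) (by omega)) hcle
      have hvG : ValidEntry n (G.Cp i k t) :=
        ((hM1 i (Finset.mem_Icc.mpr ⟨hi1, hi2⟩)).2 k (Finset.mem_Icc.mpr ⟨hk2, hkd⟩)).1 t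
          (Finset.mem_Icc.mpr ⟨ht1, ht2⟩)
      exact mval_inj hvG (hval i hi1 hi2 t ht1 ht2)
        (le_antisymm (hup k hk2 hkd) (hdown (conjC n lam i - k) k hk2 (by omega)))
    -- unprimed columns are determined
    have hCcU : ∀ i, 2 ≤ i → i ≤ lam 1 → ∀ j, 1 ≤ j → j ≤ conjC n lam i →
        ∀ t, 1 ≤ t → t ≤ conjC n lam i →
        G.Cc i j t = if t < j then tcol (i - 1) t else tcol i t := by
      intro i hi2 hil
      have hd1 : 1 ≤ conjC n lam i := conjC_pos n lam hn1 hil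
      have hm : conjC n lam i ≤ conjC n lam (i - 1) := conjC_le n lam (by omega)
      have hd1' : 1 ≤ conjC n lam (i - 1) := conjC_pos n lam hn1 (by omega)
      have hU1 : ∀ j, 1 ≤ j → j ≤ conjC n lam i → ∀ t, j ≤ t → t ≤ conjC n lam i →
          G.Cc i j t = tcol i t := by
        intro j hj1
        induction j, hj1 using Nat.le_induction with
        | base =>
          intro _ t ht1 ht2
          exact (hC i (Finset.mem_Icc.mpr ⟨by omega, hil⟩) t
            (Finset.mem_Icc.mpr ⟨by omega, ht2⟩)).2
        | succ j hj ih =>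
          intro hjd t ht1 ht2
          obtain ⟨rs, hch, hlt, hoff, -, -⟩ := (hM2 i (Finset.mem_Icc.mpr ⟨hi2, hil⟩) j
            (Finset.mem_Icc.mpr ⟨by omega, by omega⟩)).1
          have h1 := hoff t (Finset.mem_Icc.mpr ⟨by omega, ht2⟩) (by omega)
          rw [applyRs_not_mem _ _ _ _ (fun hmem => by have := hlt t hmem; omega)
            (by omega)] at h1
          unfold nextU at h1
          rw [if_pos (show j < conjC n lam i by omega)] at h1
          rw [h1]
          exact ih (by omega) t (by omega) ht2
      have hbd : ∀ t, 1 ≤ t → t ≤ conjC n lam i →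
          nextU n lam G i (conjC n lam i) t = tcol (i - 1) t := by
        intro t ht1 ht2
        unfold nextU
        rw [if_neg (lt_irrefl _)]
        have hcp := (hC (i - 1) (Finset.mem_Icc.mpr ⟨by omega, by omega⟩) t
          (Finset.mem_Icc.mpr ⟨ht1, by omega⟩)).1
        unfold col2 at hcp
        by_cases hone : conjC n lam (i - 1) = 1
        · rw [if_pos hone]
          rw [if_neg (by omega)] at hcp
          exact hcp
        · rw [if_neg hone]
          rw [if_pos (by omega)] at hcp
          exact hcp
      have hRstep : ∀ c, 1 ≤ c → c ≤ conjC n lam i →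
          (∀ t, 1 ≤ t → t ≤ conjC n lam i → t < c + 1 →
            nextU n lam G i c t = tcol (i - 1) t) →
          ∀ t, 1 ≤ t → t ≤ conjC n lam i → t < c → G.Cc i c t = tcol (i - 1) t := by
        intro c hc1 hcd hnx t ht1 htd htc
        obtain ⟨rs, hch, hlt, hoff, -, -⟩ := (hM2 i (Finset.mem_Icc.mpr ⟨hi2, hil⟩) c
          (Finset.mem_Icc.mpr ⟨hc1, hcd⟩)).1
        cases rs with
        | nil =>
          have h1 := hoff t (Finset.mem_Icc.mpr ⟨ht1, htd⟩) (by omega)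
          have h2 := hnx t ht1 htd (by omega)
          rw [show applyRs (G.Cc i c) c [] t = G.Cc i c t from rfl] at h1
          rw [← h1]
          exact h2
        | cons r rest =>
          exfalso
          have hr := hlt r List.mem_cons_self
          have hnotmem : r ∉ rest := by
            have hpw := List.isChain_iff_pairwise.mp hch
            intro hmem
            exact lt_irrefl r ((List.pairwise_cons.mp hpw).1 r hmem)
          have h1 := hoff r (Finset.mem_Icc.mpr ⟨by omega, by omega⟩) (by omega)
          rw [applyRs_head _ _ _ _ hnotmem (by omega)] at h1
          have h3 : G.Cc i c c = tcol i c := hU1 c hc1 hcd c le_rfl hcd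
          have h4 := hnx r (by omega) (by omega) (by omega)
          rw [h4, h3] at h1
          have h5 := (hadj' i hi2 hil c hc1 hcd r (by omega) (by omega)).2
          omega
      have hNx : ∀ m c, 1 ≤ c → c + m = conjC n lam i →
          ∀ t, 1 ≤ t → t ≤ conjC n lam i → t < c + 1 →
          nextU n lam G i c t = tcol (i - 1) t := by
        intro m
        induction m with
        | zero =>
          intro c hc1 hcd t ht1 htd _
          have hce : c = conjC n lam i := by omega
          subst hce
          exact hbd t ht1 htd
        | succ m ih =>
          intro c hc1 hcd t ht1 htd htc
          have hclt : c < conjC n lam i := by omega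
          have he : nextU n lam G i c t = G.Cc i (c + 1) t := by
            unfold nextU; rw [if_pos hclt]
          rw [he]
          exact hRstep (c + 1) (by omega) (by omega) (ih (c + 1) (by omega) (by omega))
            t ht1 htd htc
      intro j hj1 hjd t ht1 htd
      by_cases h : t < j
      · rw [if_pos h]
        exact hRstep j hj1 hjd (hNx (conjC n lam i - j) j hj1 (by omega)) t ht1 htd h
      · rw [if_neg h]
        exact hU1 j hj1 hjd t (by omega) htd
    have hCcEq : G.Cc = (cand n lam tcol).Cc := by
      funext i j t
      by_cases hin : 1 ≤ i ∧ i ≤ lam 1 ∧ j ∈ jRange n lam i ∧ 1 ≤ t ∧ t ≤ conjC n lam i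
      · obtain ⟨hi1, hi2, hj, ht1, ht2⟩ := hin
        rw [cand_Cc n lam tcol hi1 hi2 hj ht1 ht2]
        by_cases hone : i = 1
        · subst hone
          have hj1 := jRange_one hj
          subst hj1
          rw [if_neg (by omega)]
          exact (hC 1 (Finset.mem_Icc.mpr ⟨le_rfl, hi2⟩) t (Finset.mem_Icc.mpr ⟨ht1, ht2⟩)).2
        · have hd1 : 1 ≤ conjC n lam i := conjC_pos n lam hn1 hi2
          obtain ⟨hja, hjb⟩ := jRange_spec hj hd1
          exact hCcU i (by omega) hi2 j hja hjb t ht1 ht2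
      · rw [hN.1 i j t (fun hcon => hin ⟨(Finset.mem_Icc.mp hcon.1).1,
          (Finset.mem_Icc.mp hcon.1).2, hcon.2.1, (Finset.mem_Icc.mp hcon.2.2).1,
          (Finset.mem_Icc.mp hcon.2.2).2⟩)]
        simp only [cand]
        rw [if_neg hin]
    have hCpEq : G.Cp = (cand n lam tcol).Cp := by
      funext i k t
      by_cases hin : 1 ≤ i ∧ i ≤ lam 1 ∧ 2 ≤ k ∧ k ≤ conjC n lam i ∧ 1 ≤ t ∧
          t ≤ conjC n lam i
      · obtain ⟨h1, h2, h3, h4, h5, h6⟩ := hin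
        rw [cand_Cp n lam tcol h1 h2 h3 h4 h5 h6]
        exact hCpu i h1 h2 k h3 h4 t h5 h6
      · rw [hN.2 i k t (fun hcon => hin ⟨(Finset.mem_Icc.mp hcon.1).1,
          (Finset.mem_Icc.mp hcon.1).2, (Finset.mem_Icc.mp hcon.2.1).1,
          (Finset.mem_Icc.mp hcon.2.1).2, (Finset.mem_Icc.mp hcon.2.2).1,
          (Finset.mem_Icc.mp hcon.2.2).2⟩)]
        simp only [cand]
        rw [if_neg hin]
    calc G = ⟨G.Cc, G.Cp⟩ := rfl
    _ = ⟨(cand n lam tcol).Cc, (cand n lam tcol).Cp⟩ := by rw [hCcEq, hCpEq]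
    _ = cand n lam tcol := rfl
end Stmt15
end

section
/- In type A, suppose σ = f(w,T) for a folding pair (w,T) with the fixed λ-chain Γ. Then for each j with 2 ≤ j ≤ λ₁, the columns π_{j} and π_{j−1} of the filling (i.e. the words π_j(1)...π_j(λ'_j) and π_{j−1}(1)...π_{j−1}(λ'_{j−1})) do not attack each other: π_j(i) ≠ π_{j−1}(k) for all i < k, and all entries within π_j(1),...,π_j(λ'_j) are distinct; that is, the image f(w,T) is always a non-attacking filling. -/
/-!
Statement 18: In type A, for any folding pair (w,T) with the fixed λ-chain Γ, the
consecutive columns π_j and π_{j-1} of the filling f(w,T) do not attack each other: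
π_j(i) ≠ π_{j-1}(k) for all i < k (cells of λ), all entries within a column are
distinct, and consequently f(w,T) is a non-attacking filling.
-/

namespace Stmt18



def cells (n : ℕ) (lam : ℕ → ℕ) : Finset (ℕ × ℕ) :=
  (Finset.Icc 1 (n - 1)).biUnion fun i => {i} ×ˢ Finset.Icc 1 (lam i)

def conj (n : ℕ) (lam : ℕ → ℕ) (j : ℕ) : ℕ :=
  ((Finset.Icc 1 (n - 1)).filter fun i => j ≤ lam i).card

/-- the row ((a,n),(a,n-1),…,(a,k+1)) of the segment Γ(k) -/
def rowG (n a k : ℕ) : List (ℕ × ℕ) :=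
  ((List.Ico (k + 1) (n + 1)).reverse).map fun b => (a, b)

/-- the same row with the last root (a,k+1) removed -/
def rowG' (n a k : ℕ) : List (ℕ × ℕ) :=
  ((List.Ico (k + 2) (n + 1)).reverse).map fun b => (a, b)

/-- the segment Γ(k): rows a = k, k-1, …, 1 -/
def GammaSeg (n k : ℕ) : List (ℕ × ℕ) :=
  ((List.range k).reverse).flatMap fun a0 => rowG n (a0 + 1) k

/-- the segment Γ'(k) -/
def GammaSeg' (n k : ℕ) : List (ℕ × ℕ) :=
  ((List.range k).reverse).flatMap fun a0 => rowG' n (a0 + 1) k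

open Classical in
/-- the factor Γ_j of the λ-chain: Γ'(λ'_j) if j is minimal with its conjugate value,
Γ(λ'_j) otherwise -/
noncomputable def GammaFactor (n : ℕ) (lam : ℕ → ℕ) (j : ℕ) : List (ℕ × ℕ) :=
  if (∀ i, 1 ≤ i → conj n lam i = conj n lam j → j ≤ i) then
    GammaSeg' n (conj n lam j) else GammaSeg n (conj n lam j)

/-- the concatenation Γ_{λ₁} Γ_{λ₁ - 1} ⋯ Γ_j -/
noncomputable def GammaDown (n : ℕ) (lam : ℕ → ℕ) (j : ℕ) : List (ℕ × ℕ) :=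
  ((List.range (lam 1 + 1 - j)).reverse).flatMap fun j0 => GammaFactor n lam (j0 + j)

/-- the fixed λ-chain Γ = Γ_{λ₁} ⋯ Γ₂ -/
noncomputable def GammaChain (n : ℕ) (lam : ℕ → ℕ) : List (ℕ × ℕ) :=
  GammaDown n lam 2

/-- the product of the transpositions at the selected (global) positions of a prefix of Γ,
taken in order -/
noncomputable def prodSel (L : List (ℕ × ℕ)) (J : Finset ℕ) : Equiv.Perm ℕ :=
  (((L.zipIdx.map Prod.swap).filter fun q => q.1 ∈ J).map fun q => Equiv.swap q.2.1 q.2.2).prod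

/-- π_j = w T_{λ₁} ⋯ T_{j+1} -/
noncomputable def piPerm (n : ℕ) (lam : ℕ → ℕ) (w : Equiv.Perm ℕ) (J : Finset ℕ)
    (j : ℕ) : Equiv.Perm ℕ :=
  w * prodSel (GammaDown n lam (j + 1)) J

/-- the filling map: f(w,T)(i,j) = π_j(i) -/
noncomputable def fillingMap (n : ℕ) (lam : ℕ → ℕ) (w : Equiv.Perm ℕ) (J : Finset ℕ) :
    ℕ × ℕ → ℕ :=
  fun c => piPerm n lam w J c.2 c.1

/-- w is a permutation of {1,…,n} (an element of S_n) -/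
def IsSnPerm (n : ℕ) (w : Equiv.Perm ℕ) : Prop :=
  ∀ i : ℕ, (i ∈ Finset.Icc 1 n → w i ∈ Finset.Icc 1 n) ∧ (i ∉ Finset.Icc 1 n → w i = i)

def Attack (c d : ℕ × ℕ) : Prop :=
  c ≠ d ∧ (c.2 = d.2 ∨ (c.2 = d.2 + 1 ∧ c.1 < d.1) ∨ (d.2 = c.2 + 1 ∧ d.1 < c.1))

/-! ### Auxiliary development -/

open List

/-- product of swaps of a list of pairs, in list order -/
noncomputable def prodL (L : List (ℕ × ℕ)) : Equiv.Perm ℕ :=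
  (L.map fun p => Equiv.swap p.1 p.2).prod

open Classical in
/-- product of the selected swaps of `L`, positions enumerated starting at `s` -/
noncomputable def prodTail (L : List (ℕ × ℕ)) (s : ℕ) (J : Finset ℕ) : Equiv.Perm ℕ :=
  ((((L.zipIdx s).map Prod.swap).filter fun q => q.1 ∈ J).map fun q => Equiv.swap q.2.1 q.2.2).prod

lemma prodL_nil : prodL [] = 1 := rfl

lemma prodL_append (L1 L2 : List (ℕ × ℕ)) : prodL (L1 ++ L2) = prodL L1 * prodL L2 := by
  unfold prodL; rw [List.map_append, List.prod_append]

lemma filtered_enum_prod (L : List (ℕ × ℕ)) (s : ℕ) (p : ℕ × (ℕ × ℕ) → Bool) :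
    ∃ L', L'.Sublist L ∧
      ((((L.zipIdx s).map Prod.swap).filter p).map fun q => Equiv.swap q.2.1 q.2.2).prod = prodL L' := by
  refine ⟨(((L.zipIdx s).map Prod.swap).filter p).map Prod.snd, ?_, ?_⟩
  · have h1 : (((L.zipIdx s).map Prod.swap).filter p).Sublist ((L.zipIdx s).map Prod.swap) := List.filter_sublist
    have h2 := h1.map Prod.snd
    rwa [List.map_map, show (Prod.snd ∘ Prod.swap : (ℕ × ℕ) × ℕ → ℕ × ℕ) = Prod.fst from rfl,
      List.zipIdx_map_fst] at h2
  · unfold prodL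
    rw [List.map_map]
    rfl

lemma prodTail_eq_prodL (L : List (ℕ × ℕ)) (s : ℕ) (J : Finset ℕ) :
    ∃ L', L'.Sublist L ∧ prodTail L s J = prodL L' := by
  unfold prodTail
  exact filtered_enum_prod L s _

lemma prodSel_eq_prodTail (L : List (ℕ × ℕ)) (J : Finset ℕ) :
    prodSel L J = prodTail L 0 J := by
  unfold prodSel prodTail
  rfl

lemma prodTail_append (L1 L2 : List (ℕ × ℕ)) (s : ℕ) (J : Finset ℕ) :
    prodTail (L1 ++ L2) s J = prodTail L1 s J * prodTail L2 (s + L1.length) J := by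
  unfold prodTail
  rw [List.zipIdx_append, List.map_append, List.filter_append, List.map_append, List.prod_append]

/-! ### the λ-chain decomposes -/

lemma flatMap_rev_range_succ {α : Type*} (f : ℕ → List α) (t : ℕ) :
    ((List.range (t + 1)).reverse).flatMap f
      = ((List.range t).reverse).flatMap (fun x => f (x + 1)) ++ f 0 := by
  induction t with
  | zero => simp [List.range_succ]
  | succ t ih =>
      have h1 : (List.range (t + 2)).reverse = (t + 1) :: (List.range (t + 1)).reverse := by
        rw [List.range_succ]; simp
      have h2 : (List.range (t + 1)).reverse = t :: (List.range t).reverse := by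
        rw [List.range_succ]; simp
      rw [h1, List.flatMap_cons, ih, h2, List.flatMap_cons, List.append_assoc]

lemma GammaDown_split (n : ℕ) (lam : ℕ → ℕ) (j : ℕ) (h2 : 2 ≤ j) (hj : j ≤ lam 1) :
    GammaDown n lam j = GammaDown n lam (j + 1) ++ GammaFactor n lam j := by
  unfold GammaDown
  have ht : lam 1 + 1 - j = (lam 1 - j) + 1 := by omega
  have ht' : lam 1 + 1 - (j + 1) = lam 1 - j := by omega
  rw [ht, flatMap_rev_range_succ, ht']
  have hf : (fun x => GammaFactor n lam (x + 1 + j)) = fun x => GammaFactor n lam (x + (j + 1)) := by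
    funext x; congr 1; omega
  rw [hf]
  norm_num

/-! ### sublist facts about the segments -/

lemma rowG'_sublist (n a k : ℕ) : (rowG' n a k).Sublist (rowG n a k) := by
  unfold rowG rowG'
  apply List.Sublist.map
  apply List.Sublist.reverse
  by_cases h : k + 2 ≤ n + 1
  · rw [← List.Ico.append_consecutive (by omega : k + 1 ≤ k + 2) h]
    exact List.sublist_append_right _ _
  · have : List.Ico (k + 2) (n + 1) = [] := by
      apply List.Ico.eq_nil_of_le
      omega
    rw [this]
    exact List.nil_sublist _

lemma flatMap_sublist {α β : Type*} (l : List α) (f g : α → List β)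
    (h : ∀ a, (f a).Sublist (g a)) : (l.flatMap f).Sublist (l.flatMap g) := by
  induction l with
  | nil => simp
  | cons x xs ih =>
      rw [List.flatMap_cons, List.flatMap_cons]
      exact List.Sublist.append (h x) ih

lemma GammaSeg'_sublist (n k : ℕ) : (GammaSeg' n k).Sublist (GammaSeg n k) := by
  unfold GammaSeg GammaSeg'
  exact flatMap_sublist _ _ _ fun a0 => rowG'_sublist n (a0 + 1) k

lemma GammaFactor_sublist (n : ℕ) (lam : ℕ → ℕ) (j : ℕ) :
    (GammaFactor n lam j).Sublist (GammaSeg n (conj n lam j)) := by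
  unfold GammaFactor
  split
  · exact GammaSeg'_sublist _ _
  · exact List.Sublist.refl _

lemma mem_GammaSeg' (n k : ℕ) (p : ℕ × ℕ) (hp : p ∈ GammaSeg' n k) :
    p.1 ≤ k ∧ k + 2 ≤ p.2 := by
  unfold GammaSeg' at hp
  rw [List.mem_flatMap] at hp
  obtain ⟨a0, ha0, hp⟩ := hp
  rw [List.mem_reverse, List.mem_range] at ha0
  unfold rowG' at hp
  rw [List.mem_map] at hp
  obtain ⟨b, hb, rfl⟩ := hp
  rw [List.mem_reverse, List.Ico.mem] at hb
  exact ⟨by omega, by omega⟩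

lemma prodL_fix (v : ℕ) : ∀ L : List (ℕ × ℕ), (∀ p ∈ L, p.1 ≠ v ∧ p.2 ≠ v) →
    prodL L v = v := by
  intro L
  induction L with
  | nil => intro _; rfl
  | cons p ps ih =>
      intro h
      have hp := h p List.mem_cons_self
      have : prodL (p :: ps) = Equiv.swap p.1 p.2 * prodL ps := by
        unfold prodL; rw [List.map_cons, List.prod_cons]
      rw [this, Equiv.Perm.mul_apply, ih (fun q hq => h q (List.mem_cons_of_mem _ hq))]
      exact Equiv.swap_apply_of_ne_of_ne (Ne.symm hp.1) (Ne.symm hp.2)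

/-! ### the key invariant -/

def GoodP (k' a : ℕ) (ρ : Equiv.Perm ℕ) : Prop :=
  ∀ k, 1 ≤ k → k ≤ k' → ρ k = k ∨ (k < ρ k ∧ k ≤ a ∧ (ρ k ≤ a ∨ k' < ρ k))

def MidP (k' a b : ℕ) (ρ : Equiv.Perm ℕ) : Prop :=
  (∀ k, 1 ≤ k → k ≤ k' → ρ k = k ∨ (k < ρ k ∧ k ≤ a + 1 ∧ (ρ k ≤ a + 1 ∨ k' < ρ k)))
  ∧ (ρ (a + 1) = a + 1 ∨ (k' < ρ (a + 1) ∧ ρ (a + 1) < b))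

lemma midP_of_goodP {k' a : ℕ} {ρ : Equiv.Perm ℕ} (ha : a + 1 ≤ k')
    (h : GoodP k' a ρ) : MidP k' a (k' + 1) ρ := by
  constructor
  · intro k hk1 hk2
    rcases h k hk1 hk2 with h' | ⟨h1, h2, h3⟩
    · exact Or.inl h'
    · exact Or.inr ⟨h1, by omega, by omega⟩
  · rcases h (a + 1) (by omega) ha with h' | ⟨h1, h2, h3⟩
    · exact Or.inl h'
    · omega

lemma midP_mono {k' a b b' : ℕ} {ρ : Equiv.Perm ℕ} (hb : b ≤ b')
    (h : MidP k' a b ρ) : MidP k' a b' ρ := by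
  refine ⟨h.1, ?_⟩
  rcases h.2 with h' | ⟨h1, h2⟩
  · exact Or.inl h'
  · exact Or.inr ⟨h1, by omega⟩

lemma goodP_of_midP {k' a b : ℕ} {ρ : Equiv.Perm ℕ} (h : MidP k' a b ρ) :
    GoodP k' (a + 1) ρ := h.1

lemma midP_swap {k' a b x : ℕ} {ρ : Equiv.Perm ℕ} (ha : a + 1 ≤ k')
    (hbx : b ≤ x) (hkx : k' < x) (h : MidP k' a b ρ) :
    MidP k' a (x + 1) (Equiv.swap (a + 1) x * ρ) := by
  obtain ⟨h1, h2⟩ := h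
  have hax : a + 1 ≠ x := by omega
  constructor
  · intro k hk1 hk2
    rw [Equiv.Perm.mul_apply]
    rcases h1 k hk1 hk2 with he | ⟨hlt, hka, hd⟩
    · rw [he]
      by_cases hk : k = a + 1
      · subst hk
        rw [Equiv.swap_apply_left]
        exact Or.inr ⟨by omega, le_refl _, Or.inr hkx⟩
      · rw [Equiv.swap_apply_of_ne_of_ne hk (by omega)]
        exact Or.inl rfl
    · rcases hd with hy | hy
      · -- ρ k ≤ a + 1
        by_cases hy' : ρ k = a + 1
        · rw [hy', Equiv.swap_apply_left]
          exact Or.inr ⟨by omega, by omega, Or.inr hkx⟩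
        · rw [Equiv.swap_apply_of_ne_of_ne hy' (by omega)]
          exact Or.inr ⟨hlt, hka, Or.inl hy⟩
      · -- k' < ρ k
        by_cases hy' : ρ k = x
        · -- lands at a + 1 ; must have k ≤ a
          have hkne : k ≠ a + 1 := by
            intro hk
            subst hk
            rcases h2 with h2' | ⟨h2a, h2b⟩
            · omega
            · omega
          rw [hy', Equiv.swap_apply_right]
          exact Or.inr ⟨by omega, by omega, Or.inl (le_refl _)⟩
        · rw [Equiv.swap_apply_of_ne_of_ne (by omega) hy']
          exact Or.inr ⟨hlt, hka, Or.inr hy⟩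
  · rw [Equiv.Perm.mul_apply]
    rcases h2 with h2' | ⟨h2a, h2b⟩
    · rw [h2', Equiv.swap_apply_left]
      exact Or.inr ⟨hkx, by omega⟩
    · rw [Equiv.swap_apply_of_ne_of_ne (by omega) (by omega)]
      exact Or.inr ⟨h2a, by omega⟩

lemma row_lemma {k' a : ℕ} (ha : a + 1 ≤ k') :
    ∀ (B : List ℕ), B.Pairwise (· > ·) →
      ∀ b c, (∀ x ∈ B, k' < x ∧ b ≤ x ∧ x < c) → b ≤ c →
      ∀ ρ : Equiv.Perm ℕ, MidP k' a b ρ →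
        MidP k' a c ((B.map fun x => Equiv.swap (a + 1) x).prod * ρ) := by
  intro B
  induction B with
  | nil =>
      intro _ b c _ hbc ρ h
      simpa using midP_mono hbc h
  | cons x B' ih =>
      intro hpw b c hmem hbc ρ h
      have hx := hmem x List.mem_cons_self
      have hB' : ∀ y ∈ B', k' < y ∧ b ≤ y ∧ y < x := by
        intro y hy
        have := hmem y (List.mem_cons_of_mem _ hy)
        have hlt : x > y := (List.pairwise_cons.mp hpw).1 y hy
        exact ⟨this.1, this.2.1, hlt⟩
      have hmid := ih (List.pairwise_cons.mp hpw).2 b x hB' (by omega) ρ h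
      have hstep := midP_swap ha (le_refl x) hx.1 hmid
      have : ((x :: B').map fun y => Equiv.swap (a + 1) y).prod * ρ
          = Equiv.swap (a + 1) x * ((B'.map fun y => Equiv.swap (a + 1) y).prod * ρ) := by
        rw [List.map_cons, List.prod_cons, mul_assoc]
      rw [this]
      exact midP_mono (by omega) hstep

/-- partial segment: rows a, a-1, …, 1 -/
def GammaSegLow (n k A : ℕ) : List (ℕ × ℕ) :=
  ((List.range A).reverse).flatMap fun a0 => rowG n (a0 + 1) k

lemma GammaSeg_eq_low (n k : ℕ) : GammaSeg n k = GammaSegLow n k k := rfl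

lemma segLow_good (n k' : ℕ) :
    ∀ A, A ≤ k' → ∀ L', L'.Sublist (GammaSegLow n k' A) → GoodP k' A (prodL L') := by
  intro A
  induction A with
  | zero =>
      intro _ L' hL'
      have : L' = [] := by
        simpa [GammaSegLow] using hL'
      subst this
      intro k hk1 hk2
      exact Or.inl rfl
  | succ A ih =>
      intro hA L' hL'
      have hsplit : GammaSegLow n k' (A + 1) = rowG n (A + 1) k' ++ GammaSegLow n k' A := by
        unfold GammaSegLow
        rw [List.range_succ]
        simp [List.flatMap_cons]
      rw [hsplit] at hL'
      rw [List.sublist_append_iff] at hL'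
      obtain ⟨L1, L2, rfl, hL1, hL2⟩ := hL'
      rw [prodL_append]
      have hgood := ih (by omega) L2 hL2
      have hmid : MidP k' A (k' + 1) (prodL L2) := midP_of_goodP hA hgood
      -- L1 is a sublist of the row
      unfold rowG at hL1
      rw [List.sublist_map_iff] at hL1
      obtain ⟨B, hB, rfl⟩ := hL1
      have hpw : B.Pairwise (· > ·) := by
        refine List.Pairwise.sublist hB ?_
        rw [List.pairwise_reverse]
        exact List.Ico.pairwise_lt _ _
      have hmem : ∀ x ∈ B, k' < x ∧ k' + 1 ≤ x ∧ x < n + k' + 2 := by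
        intro x hx
        have := hB.subset hx
        rw [List.mem_reverse, List.Ico.mem] at this
        exact ⟨by omega, by omega, by omega⟩
      have hrow := row_lemma hA B hpw (k' + 1) (n + k' + 2) hmem (by omega) (prodL L2) hmid
      have heq : prodL (B.map fun b => (A + 1, b)) = (B.map fun x => Equiv.swap (A + 1) x).prod := by
        unfold prodL
        rw [List.map_map]
        rfl
      rw [heq]
      exact goodP_of_midP hrow

/-! ### facts about conj and lam -/

lemma lam_strict_aux (n : ℕ) (lam : ℕ → ℕ)
    (hstrict : ∀ i, 1 ≤ i → i < n - 1 → lam (i + 1) < lam i) :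
    ∀ i i', 1 ≤ i → i < i' → i' ≤ n - 1 → lam i' < lam i := by
  intro i i'
  induction i' with
  | zero => omega
  | succ i' ih =>
      intro h1 h2 h3
      by_cases h : i = i'
      · subst h
        exact hstrict i h1 (by omega)
      · have ha : lam i' < lam i := ih h1 (by omega) (by omega)
        have hb : lam (i' + 1) < lam i' := hstrict i' (by omega) (by omega)
        omega

lemma lam_mono_aux (n : ℕ) (lam : ℕ → ℕ)
    (hstrict : ∀ i, 1 ≤ i → i < n - 1 → lam (i + 1) < lam i) :
    ∀ i i', 1 ≤ i → i ≤ i' → i' ≤ n - 1 → lam i' ≤ lam i := by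
  intro i i' h1 h2 h3
  rcases eq_or_lt_of_le h2 with h | h
  · subst h
    exact le_refl _
  · exact le_of_lt (lam_strict_aux n lam hstrict i i' h1 h h3)

lemma conj_anti (n : ℕ) (lam : ℕ → ℕ) {j j' : ℕ} (h : j ≤ j') :
    conj n lam j' ≤ conj n lam j := by
  unfold conj
  apply Finset.card_le_card
  intro x hx
  rw [Finset.mem_filter] at hx ⊢
  exact ⟨hx.1, le_trans h hx.2⟩

lemma mem_le_conj (n : ℕ) (lam : ℕ → ℕ)
    (hstrict : ∀ i, 1 ≤ i → i < n - 1 → lam (i + 1) < lam i)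
    {i j : ℕ} (h1 : 1 ≤ i) (h2 : i ≤ n - 1) (h3 : j ≤ lam i) : i ≤ conj n lam j := by
  have hsub : Finset.Icc 1 i ⊆ (Finset.Icc 1 (n - 1)).filter fun i' => j ≤ lam i' := by
    intro x hx
    rw [Finset.mem_Icc] at hx
    rw [Finset.mem_filter, Finset.mem_Icc]
    refine ⟨⟨hx.1, by omega⟩, ?_⟩
    have := lam_mono_aux n lam hstrict x i hx.1 hx.2 h2
    omega
  have hcard := Finset.card_le_card hsub
  rw [Nat.card_Icc] at hcard
  unfold conj
  omega

lemma conj_pred_le (n : ℕ) (lam : ℕ → ℕ)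
    (hstrict : ∀ i, 1 ≤ i → i < n - 1 → lam (i + 1) < lam i)
    (j : ℕ) (hj : 2 ≤ j) : conj n lam (j - 1) ≤ conj n lam j + 1 := by
  classical
  have hsub : (Finset.Icc 1 (n - 1)).filter (fun i => j - 1 ≤ lam i) ⊆
      ((Finset.Icc 1 (n - 1)).filter fun i => j ≤ lam i)
        ∪ ((Finset.Icc 1 (n - 1)).filter fun i => lam i = j - 1) := by
    intro x hx
    rw [Finset.mem_filter] at hx
    rw [Finset.mem_union, Finset.mem_filter, Finset.mem_filter]
    by_cases h : j ≤ lam x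
    · exact Or.inl ⟨hx.1, h⟩
    · exact Or.inr ⟨hx.1, by omega⟩
  have hone : ((Finset.Icc 1 (n - 1)).filter fun i => lam i = j - 1).card ≤ 1 := by
    rw [Finset.card_le_one]
    intro a ha b hb
    rw [Finset.mem_filter, Finset.mem_Icc] at ha hb
    rcases lt_trichotomy a b with h | h | h
    · have := lam_strict_aux n lam hstrict a b ha.1.1 h hb.1.2
      omega
    · exact h
    · have := lam_strict_aux n lam hstrict b a hb.1.1 h ha.1.2
      omega
  have h1 := Finset.card_le_card hsub
  have h2 := Finset.card_union_le ((Finset.Icc 1 (n - 1)).filter fun i => j ≤ lam i)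
      ((Finset.Icc 1 (n - 1)).filter fun i => lam i = j - 1)
  unfold conj
  omega

theorem filling_map_lands_in_nonattacking (n : ℕ) (lam : ℕ → ℕ) (hn : 2 ≤ n)
    (hstrict : ∀ i, 1 ≤ i → i < n - 1 → lam (i + 1) < lam i)
    (hpos : 0 < lam (n - 1))
    (w : Equiv.Perm ℕ) (hw : IsSnPerm n w)
    (J : Finset ℕ) (hJ : J ⊆ Finset.range (GammaChain n lam).length) :
    (∀ j, 2 ≤ j → j ≤ lam 1 →
      ∀ i k, 1 ≤ i → i ≤ conj n lam j → 1 ≤ k → k ≤ conj n lam (j - 1) → i < k →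
        piPerm n lam w J j i ≠ piPerm n lam w J (j - 1) k) ∧
    (∀ j, 1 ≤ j → j ≤ lam 1 →
      ∀ i k, 1 ≤ i → i ≤ conj n lam j → 1 ≤ k → k ≤ conj n lam j → i ≠ k →
        piPerm n lam w J j i ≠ piPerm n lam w J j k) ∧
    (∀ c ∈ cells n lam, ∀ d ∈ cells n lam, Attack c d →
      fillingMap n lam w J c ≠ fillingMap n lam w J d) := by
  have part1 : ∀ j, 2 ≤ j → j ≤ lam 1 →
      ∀ i k, 1 ≤ i → i ≤ conj n lam j → 1 ≤ k → k ≤ conj n lam (j - 1) → i < k →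
        piPerm n lam w J j i ≠ piPerm n lam w J (j - 1) k := by
    intro j hj2 hj1 i k hi1 hi2 hk1 hk2 hik
    set k' := conj n lam j with hk'
    have hj' : j - 1 + 1 = j := by omega
    have hsplit := GammaDown_split n lam j hj2 hj1
    have hpi : piPerm n lam w J (j - 1) = piPerm n lam w J j *
        prodTail (GammaFactor n lam j) (0 + (GammaDown n lam (j + 1)).length) J := by
      unfold piPerm
      rw [hj', hsplit]
      simp only [prodSel_eq_prodTail]
      rw [prodTail_append, mul_assoc]
    obtain ⟨L'', hsubF, htau⟩ :=
      prodTail_eq_prodL (GammaFactor n lam j) (0 + (GammaDown n lam (j + 1)).length) J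
    rw [htau] at hpi
    intro heq
    rw [hpi, Equiv.Perm.mul_apply] at heq
    have hki : i = prodL L'' k := (piPerm n lam w J j).injective heq
    have hanti : conj n lam j ≤ conj n lam (j - 1) := conj_anti n lam (by omega)
    by_cases hcase : conj n lam (j - 1) = k'
    · have hsubseg : L''.Sublist (GammaSeg n k') := hsubF.trans (GammaFactor_sublist n lam j)
      have hgood := segLow_good n k' k' (le_refl _) L''
        (by rw [← GammaSeg_eq_low]; exact hsubseg)
      rcases hgood k hk1 (by omega) with h | h
      · omega
      · have := h.1
        omega
    · have hc1 : conj n lam (j - 1) = k' + 1 := by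
        have := conj_pred_le n lam hstrict j hj2
        omega
      have hmin : ∀ i', 1 ≤ i' → conj n lam i' = conj n lam j → j ≤ i' := by
        intro i' h1 h2
        by_contra hlt
        push_neg at hlt
        have hle : conj n lam (j - 1) ≤ conj n lam i' := conj_anti n lam (by omega)
        omega
      have hfac : GammaFactor n lam j = GammaSeg' n k' := by
        unfold GammaFactor
        rw [if_pos hmin]
      by_cases hkk : k ≤ k'
      · have hsubseg : L''.Sublist (GammaSeg n k') := by
          refine hsubF.trans ?_
          rw [hfac]
          exact GammaSeg'_sublist n k'
        have hgood := segLow_good n k' k' (le_refl _) L''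
          (by rw [← GammaSeg_eq_low]; exact hsubseg)
        rcases hgood k hk1 hkk with h | h
        · omega
        · have := h.1
          omega
      · have hk : k = k' + 1 := by omega
        have hfix : prodL L'' k = k := by
          apply prodL_fix
          intro p hp
          have hmem : p ∈ GammaSeg' n k' := by
            rw [hfac] at hsubF
            exact hsubF.subset hp
          have := mem_GammaSeg' n k' p hmem
          omega
        omega
  have part2 : ∀ j, 1 ≤ j → j ≤ lam 1 →
      ∀ i k, 1 ≤ i → i ≤ conj n lam j → 1 ≤ k → k ≤ conj n lam j → i ≠ k →
        piPerm n lam w J j i ≠ piPerm n lam w J j k := by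
    intro j _ _ i k _ _ _ _ hik heq
    exact hik ((piPerm n lam w J j).injective heq)
  refine ⟨part1, part2, ?_⟩
  have hcell : ∀ c ∈ cells n lam, 1 ≤ c.1 ∧ c.1 ≤ n - 1 ∧ 1 ≤ c.2 ∧ c.2 ≤ lam c.1 := by
    intro c hc
    unfold cells at hc
    rw [Finset.mem_biUnion] at hc
    obtain ⟨i, hi, hc⟩ := hc
    rw [Finset.mem_product] at hc
    rw [Finset.mem_Icc] at hi
    have h1 : c.1 = i := Finset.mem_singleton.mp hc.1
    have h2 := Finset.mem_Icc.mp hc.2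
    subst h1
    exact ⟨by omega, by omega, h2.1, h2.2⟩
  intro c hc d hd hatt
  obtain ⟨hc1, hc2, hc3, hc4⟩ := hcell c hc
  obtain ⟨hd1, hd2, hd3, hd4⟩ := hcell d hd
  have hclam : c.2 ≤ lam 1 := by
    have := lam_mono_aux n lam hstrict 1 c.1 (le_refl _) hc1 hc2
    omega
  have hdlam : d.2 ≤ lam 1 := by
    have := lam_mono_aux n lam hstrict 1 d.1 (le_refl _) hd1 hd2
    omega
  obtain ⟨hne, hcase⟩ := hatt
  unfold fillingMap
  rcases hcase with h | ⟨h, hlt⟩ | ⟨h, hlt⟩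
  · -- same column
    intro heq
    rw [h] at heq
    have := (piPerm n lam w J d.2).injective heq
    exact hne (Prod.ext this h)
  · -- c.2 = d.2 + 1, c.1 < d.1
    have h2j : 2 ≤ c.2 := by omega
    have key := part1 c.2 h2j hclam c.1 d.1 hc1
      (mem_le_conj n lam hstrict hc1 hc2 hc4) hd1
      (by
        apply mem_le_conj n lam hstrict hd1 hd2
        omega) hlt
    have hj1 : c.2 - 1 = d.2 := by omega
    rwa [hj1] at key
  · -- d.2 = c.2 + 1, d.1 < c.1
    have h2j : 2 ≤ d.2 := by omega
    have key := part1 d.2 h2j hdlam d.1 c.1 hd1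
      (mem_le_conj n lam hstrict hd1 hd2 hd4) hc1
      (by
        apply mem_le_conj n lam hstrict hc1 hc2
        omega) hlt
    have hj1 : d.2 - 1 = c.2 := by omega
    rw [hj1] at key
    exact key.symm

end Stmt18
end
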